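/- arXiv:2410.23505 — 6 statements merged into one kernel-verified Lean document; each statement's English description precedes it below -/
import Mathlib

section
/- Let d ≥ 2 be an integer, 1 ≤ p ≤ 2, and R > 0. Let m : [0,∞) → ℂ be integrable, and for n ∈ ℤ define b_n : [−1/2, 1/2] → ℂ by b_n(t) = R m̂(R(t+n)), where m̂ is extended evenly to ℝ. Then there is a constant C = C(p,d), independent of m and R, such that ( Σ_{n∈ℤ, n≠0} [ ⟨Rn⟩^{α(p)} ‖b_n‖_{L^p([−1/2,1/2])} ]^p )^{1/p} ≤ C R^{1/p'} C_p(m). -/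
open MeasureTheory Real Set Filter
open scoped ENNReal

noncomputable section

/-- The cosine transform of a function `m : [0,∞) → ℂ`. -/
def cosT (m : ℝ → ℂ) (t : ℝ) : ℂ :=
  ∫ l in Set.Ioi (0 : ℝ), m l * (Real.cos (2 * Real.pi * l * t) : ℂ)

/-- The even extension of the cosine transform to all of `ℝ`. -/
def cosTE (m : ℝ → ℂ) (t : ℝ) : ℂ := cosT m |t|

/-- The Japanese bracket `⟨t⟩ = (1 + t²)^{1/2}`. -/
def jap (t : ℝ) : ℝ := (1 + t ^ 2) ^ ((1 : ℝ) / 2)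

/-- `α(p) = (d−1)(1/p − 1/2)`. -/
def alphaP (d : ℕ) (p : ℝ) : ℝ := ((d : ℝ) - 1) * (1 / p - 1 / 2)

/-- `C_p(m) = ( ∫₀^∞ [ ⟨t⟩^{α(p)} |m̂(t)| ]^p dt )^{1/p}`, as an extended real. -/
def Cp (d : ℕ) (p : ℝ) (m : ℝ → ℂ) : ℝ≥0∞ :=
  (∫⁻ t in Set.Ioi (0 : ℝ),
      ENNReal.ofReal ((jap t ^ alphaP d p * ‖cosT m t‖) ^ p)) ^ (1 / p)

/-! ### Auxiliary lemmas -/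


lemma jap_pos (t : ℝ) : 0 < jap t := Real.rpow_pos_of_pos (by positivity) _

lemma jap_nonneg (t : ℝ) : 0 ≤ jap t := (jap_pos t).le

lemma myMono {s : Set ℝ} (hs : MeasurableSet s) {f g : ℝ → ℝ≥0∞}
    (h : ∀ x ∈ s, f x ≤ g x) : ∫⁻ x in s, f x ≤ ∫⁻ x in s, g x := by
  rw [← lintegral_indicator hs f, ← lintegral_indicator hs g]
  refine lintegral_mono fun x => ?_
  by_cases hx : x ∈ s
  · simpa [Set.indicator_of_mem hx] using h x hx
  · simp [Set.indicator_of_notMem hx]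

lemma myMul (f : ℝ → ℝ≥0∞) {R : ℝ} (hR : R ≠ 0) :
    ∫⁻ x, f (R * x) = ENNReal.ofReal |R⁻¹| * ∫⁻ x, f x := by
  have h1 : ∫⁻ y, f y ∂(Measure.map (R * ·) volume) = ∫⁻ x, f (R * x) :=
    lintegral_map_equiv f (Homeomorph.mulLeft₀ R hR).toMeasurableEquiv
  rw [← h1, Real.map_volume_mul_left hR, lintegral_smul_measure, smul_eq_mul]

lemma myAffine (f : ℝ → ℝ≥0∞) {R : ℝ} (hR : 0 < R) (c : ℝ) :
    ∫⁻ x, f (R * x + c) = ENNReal.ofReal R⁻¹ * ∫⁻ x, f x := by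
  have h1 := myMul (fun y => f (y + c)) hR.ne'
  rw [h1, lintegral_add_right_eq_self (fun y => f y) c, abs_of_pos (inv_pos.mpr hR)]

lemma mySetAffine (f : ℝ → ℝ≥0∞) {R : ℝ} (hR : 0 < R) (c a b : ℝ) :
    ∫⁻ x in Icc a b, f (R * x + c)
      = ENNReal.ofReal R⁻¹ * ∫⁻ s in Icc (R * a + c) (R * b + c), f s := by
  rw [← lintegral_indicator measurableSet_Icc, ← lintegral_indicator measurableSet_Icc]
  have key : ∀ x : ℝ, (Icc a b).indicator (fun t => f (R * t + c)) x
      = (Icc (R * a + c) (R * b + c)).indicator f (R * x + c) := by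
    intro x
    have hiff : x ∈ Icc a b ↔ R * x + c ∈ Icc (R * a + c) (R * b + c) := by
      simp only [mem_Icc]
      constructor <;> rintro ⟨h1, h2⟩ <;> constructor <;> nlinarith
    by_cases hx : x ∈ Icc a b
    · rw [Set.indicator_of_mem hx, Set.indicator_of_mem (hiff.mp hx)]
    · rw [Set.indicator_of_notMem hx, Set.indicator_of_notMem (fun h => hx (hiff.mpr h))]
  simp_rw [key]
  exact myAffine _ hR c

lemma myEven (f : ℝ → ℝ≥0∞) (hf : ∀ x, f (-x) = f x) :
    ∫⁻ x, f x = 2 * ∫⁻ x in Ioi (0 : ℝ), f x := by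
  have hneg : ∫⁻ x in Iio (0 : ℝ), f x = ∫⁻ x in Ioi (0 : ℝ), f x := by
    rw [← lintegral_indicator measurableSet_Iio, ← lintegral_indicator measurableSet_Ioi]
    have h1 : ∫⁻ x, (Iio (0 : ℝ)).indicator f x = ∫⁻ x, (Iio (0 : ℝ)).indicator f (-x) := by
      have h2 := lintegral_map_equiv (μ := volume) ((Iio (0 : ℝ)).indicator f)
        (MeasurableEquiv.neg ℝ)
      have hcoe : ⇑(MeasurableEquiv.neg ℝ) = (Neg.neg : ℝ → ℝ) := rfl
      rw [hcoe] at h2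
      rw [Measure.map_neg_eq_self (volume : Measure ℝ)] at h2
      exact h2
    rw [h1]
    refine lintegral_congr fun x => ?_
    by_cases hx : 0 < x
    · rw [Set.indicator_of_mem (by simpa using hx : -x ∈ Iio (0:ℝ)),
        Set.indicator_of_mem (by simpa using hx), hf]
    · rw [Set.indicator_of_notMem (by simpa using hx),
        Set.indicator_of_notMem (by simpa using hx)]
  have hsplit := lintegral_add_compl (μ := volume) f (measurableSet_Ici (a := (0 : ℝ)))
  rw [compl_Ici] at hsplit
  rw [← hsplit, hneg, setLIntegral_congr (Ioi_ae_eq_Ici (a := (0:ℝ))).symm, two_mul]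

/-- The weight function in `Cp`. -/
def Ff (d : ℕ) (p : ℝ) (m : ℝ → ℂ) (t : ℝ) : ℝ≥0∞ :=
  ENNReal.ofReal ((jap t ^ alphaP d p * ‖cosT m t‖) ^ p)

/-- Its even extension. -/
def Gf (d : ℕ) (p : ℝ) (m : ℝ → ℂ) (s : ℝ) : ℝ≥0∞ := Ff d p m |s|

def Hf (p : ℝ) (m : ℝ → ℂ) (s : ℝ) : ℝ≥0∞ :=
  ENNReal.ofReal (‖cosTE m s‖ ^ p)

lemma GFeq (d : ℕ) (p : ℝ) (m : ℝ → ℂ) :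
    ∫⁻ s in Ioi (0:ℝ), Gf d p m s = ∫⁻ t in Ioi (0:ℝ), Ff d p m t := by
  rw [← lintegral_indicator measurableSet_Ioi, ← lintegral_indicator measurableSet_Ioi]
  refine lintegral_congr fun x => ?_
  by_cases hx : x ∈ Ioi (0:ℝ)
  · rw [Set.indicator_of_mem hx, Set.indicator_of_mem hx]
    simp only [Gf]
    rw [abs_of_pos hx]
  · rw [Set.indicator_of_notMem hx, Set.indicator_of_notMem hx]

lemma keybound (d : ℕ) {p : ℝ} (hp0 : 0 < p) (hα0 : 0 ≤ alphaP d p) (m : ℝ → ℂ)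
    {R : ℝ} (hR : 0 < R) {k : ℤ} (hk : k ≠ 0) {s : ℝ}
    (hs : s ∈ Ioo (R * (-(1:ℝ)/2) + R * (k:ℝ)) (R * (1/2) + R * (k:ℝ))) :
    ENNReal.ofReal ((jap (R * (k:ℝ)) ^ alphaP d p) ^ p) * Hf p m s
      ≤ ENNReal.ofReal (2 ^ (alphaP d p * p)) * Gf d p m s := by
  set α := alphaP d p with hαdef
  have h1k : (1:ℝ) ≤ |(k:ℝ)| := by exact_mod_cast Int.one_le_abs hk
  have habs : R * |(k:ℝ)| ≤ 2 * |s| := by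
    rcases abs_cases ((k:ℝ)) with ⟨he, h0⟩ | ⟨he, h0⟩
    · rw [he] at h1k ⊢
      nlinarith [le_abs_self s, hs.1, mul_nonneg hR.le (by linarith : (0:ℝ) ≤ (k:ℝ) - 1)]
    · rw [he] at h1k ⊢
      nlinarith [neg_le_abs s, hs.2, mul_nonneg hR.le (by linarith : (0:ℝ) ≤ -(k:ℝ) - 1)]
  have h4 : ((4:ℝ)) ^ ((1:ℝ)/2) = 2 := by
    rw [show (4:ℝ) = 2^2 by norm_num, ← Real.rpow_natCast 2 2,
      ← Real.rpow_mul (by norm_num : (0:ℝ) ≤ 2)]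
    norm_num
  have hjapb : jap (R * (k:ℝ)) ≤ 2 * jap |s| := by
    calc jap (R * (k:ℝ)) = (1 + (R * (k:ℝ))^2) ^ ((1:ℝ)/2) := rfl
      _ ≤ (4 * (1 + |s|^2)) ^ ((1:ℝ)/2) := by
          refine Real.rpow_le_rpow (by positivity) ?_ (by norm_num)
          nlinarith [mul_le_mul habs habs (by positivity) (by positivity), sq_abs s,
            sq_abs ((k:ℝ)), abs_nonneg s, abs_nonneg ((k:ℝ)), hR.le]
      _ = (4:ℝ) ^ ((1:ℝ)/2) * (1 + |s|^2) ^ ((1:ℝ)/2) :=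
          Real.mul_rpow (by norm_num) (by positivity)
      _ = 2 * jap |s| := by rw [h4]; rfl
  have hXnn : (0:ℝ) ≤ ‖cosT m |s|‖ := norm_nonneg _
  have hmain : (jap (R*(k:ℝ)) ^ α) ^ p * ‖cosTE m s‖ ^ p
      ≤ 2 ^ (α*p) * (jap |s| ^ α * ‖cosT m |s|‖) ^ p := by
    have hX : ‖cosTE m s‖ = ‖cosT m |s|‖ := rfl
    rw [hX, Real.rpow_mul (by norm_num : (0:ℝ) ≤ 2),
      Real.mul_rpow (Real.rpow_nonneg (jap_nonneg _) _) hXnn, ← mul_assoc]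
    refine mul_le_mul_of_nonneg_right ?_ (Real.rpow_nonneg hXnn p)
    rw [← Real.mul_rpow (by positivity) (Real.rpow_nonneg (jap_nonneg _) _)]
    refine Real.rpow_le_rpow (Real.rpow_nonneg (jap_nonneg _) _) ?_ hp0.le
    rw [← Real.mul_rpow (by norm_num) (jap_nonneg _)]
    exact Real.rpow_le_rpow (jap_nonneg _) hjapb hα0
  simp only [Hf, Gf, Ff, ← hαdef]
  rw [← ENNReal.ofReal_mul (Real.rpow_nonneg (Real.rpow_nonneg (jap_nonneg _) _) _),
    ← ENNReal.ofReal_mul (by positivity)]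
  exact ENNReal.ofReal_le_ofReal hmain

lemma termbound (d : ℕ) {p : ℝ} (hp0 : 0 < p) (hα0 : 0 ≤ alphaP d p) (m : ℝ → ℂ)
    {R : ℝ} (hR : 0 < R) {k : ℤ} (hk : k ≠ 0) :
    (ENNReal.ofReal (jap (R * (k:ℝ)) ^ alphaP d p) *
        eLpNorm (fun t : ℝ => (R : ℂ) * cosTE m (R * (t + (k:ℝ))))
          (ENNReal.ofReal p) (volume.restrict (Set.Icc (-(1:ℝ)/2) (1/2)))) ^ p
      ≤ ENNReal.ofReal (R ^ (p-1) * 2 ^ (alphaP d p * p)) *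
        ∫⁻ s in Ioo (R * (-(1:ℝ)/2) + R * (k:ℝ)) (R * (1/2) + R * (k:ℝ)), Gf d p m s := by
  set α := alphaP d p with hαdef
  have hq0 : (ENNReal.ofReal p) ≠ 0 := by
    simp only [ne_eq, ENNReal.ofReal_eq_zero, not_le]
    exact hp0
  rw [eLpNorm_eq_lintegral_rpow_enorm_toReal hq0 ENNReal.ofReal_ne_top,
    ENNReal.toReal_ofReal hp0.le, ENNReal.mul_rpow_of_nonneg _ _ hp0.le,
    ← ENNReal.rpow_mul, one_div_mul_cancel hp0.ne', ENNReal.rpow_one]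
  have hpt : ∀ t : ℝ, ‖(R:ℂ) * cosTE m (R * (t + (k:ℝ)))‖ₑ ^ p
      = ENNReal.ofReal (R ^ p) * Hf p m (R * t + R * (k:ℝ)) := by
    intro t
    rw [← ofReal_norm_eq_enorm, ENNReal.ofReal_rpow_of_nonneg (norm_nonneg _) hp0.le,
      norm_mul, Complex.norm_real, Real.norm_eq_abs, abs_of_pos hR,
      Real.mul_rpow hR.le (norm_nonneg _), ENNReal.ofReal_mul (by positivity)]
    simp only [Hf, mul_add]
  simp_rw [hpt]
  rw [lintegral_const_mul' _ _ ENNReal.ofReal_ne_top,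
    mySetAffine (Hf p m) hR (R * (k:ℝ)) (-(1:ℝ)/2) (1/2),
    setLIntegral_congr (Ioo_ae_eq_Icc
      (a := R * (-(1:ℝ)/2) + R * (k:ℝ)) (b := R * (1/2) + R * (k:ℝ))).symm,
    ENNReal.ofReal_rpow_of_nonneg (Real.rpow_nonneg (jap_nonneg _) _) hp0.le]
  calc ENNReal.ofReal ((jap (R * (k:ℝ)) ^ α) ^ p) *
        (ENNReal.ofReal (R ^ p) * (ENNReal.ofReal R⁻¹ *
          ∫⁻ s in Ioo (R * (-(1:ℝ)/2) + R * (k:ℝ)) (R * (1/2) + R * (k:ℝ)), Hf p m s))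
      = ENNReal.ofReal (R ^ p) * ENNReal.ofReal R⁻¹ *
          ∫⁻ s in Ioo (R * (-(1:ℝ)/2) + R * (k:ℝ)) (R * (1/2) + R * (k:ℝ)),
            ENNReal.ofReal ((jap (R * (k:ℝ)) ^ α) ^ p) * Hf p m s := by
        rw [lintegral_const_mul' _ _ ENNReal.ofReal_ne_top]; ring
    _ ≤ ENNReal.ofReal (R ^ p) * ENNReal.ofReal R⁻¹ *
          ∫⁻ s in Ioo (R * (-(1:ℝ)/2) + R * (k:ℝ)) (R * (1/2) + R * (k:ℝ)),
            ENNReal.ofReal (2 ^ (α * p)) * Gf d p m s := by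
        exact mul_le_mul_right (myMono measurableSet_Ioo
          (fun s hs => keybound d hp0 hα0 m hR hk hs)) _
    _ = ENNReal.ofReal (R ^ p) * ENNReal.ofReal R⁻¹ * ENNReal.ofReal (2 ^ (α * p)) *
          ∫⁻ s in Ioo (R * (-(1:ℝ)/2) + R * (k:ℝ)) (R * (1/2) + R * (k:ℝ)), Gf d p m s := by
        rw [lintegral_const_mul' _ _ ENNReal.ofReal_ne_top]; ring
    _ = ENNReal.ofReal (R ^ (p-1) * 2 ^ (α * p)) *
          ∫⁻ s in Ioo (R * (-(1:ℝ)/2) + R * (k:ℝ)) (R * (1/2) + R * (k:ℝ)), Gf d p m s := by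
        rw [← ENNReal.ofReal_mul (by positivity), ← ENNReal.ofReal_mul (by positivity)]
        congr 1
        rw [← Real.rpow_neg_one R, ← Real.rpow_add hR]
        ring_nf

lemma Tdisj {R : ℝ} (hR : 0 < R) :
    Pairwise (Function.onFun Disjoint (fun n : {n : ℤ // n ≠ 0} =>
      Ioo (R * (-(1:ℝ)/2) + R * ((n:ℤ):ℝ)) (R * (1/2) + R * ((n:ℤ):ℝ)))) := by
  intro i j hij
  have hne : (i:ℤ) ≠ (j:ℤ) := fun h => hij (Subtype.ext h)
  refine Set.Ioo_disjoint_Ioo.mpr ?_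
  have h1 : ((i:ℤ):ℝ) + 1 ≤ ((j:ℤ):ℝ) ∨ ((j:ℤ):ℝ) + 1 ≤ ((i:ℤ):ℝ) := by
    rcases lt_or_gt_of_ne hne with h | h
    · left; exact_mod_cast Int.add_one_le_iff.mpr h
    · right; exact_mod_cast Int.add_one_le_iff.mpr h
  rcases h1 with h | h
  · refine le_trans (min_le_left _ _) (le_trans ?_ (le_max_right _ _))
    nlinarith [mul_nonneg hR.le (by linarith : (0:ℝ) ≤ ((j:ℤ):ℝ) - ((i:ℤ):ℝ) - 1)]
  · refine le_trans (min_le_right _ _) (le_trans ?_ (le_max_left _ _))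
    nlinarith [mul_nonneg hR.le (by linarith : (0:ℝ) ≤ ((i:ℤ):ℝ) - ((j:ℤ):ℝ) - 1)]

/-- For `d ≥ 2`, `1 ≤ p ≤ 2`: with `b_n(t) = R m̂(R(t+n))` on `[−1/2,1/2]`, one has
`( Σ_{n≠0} [ ⟨Rn⟩^{α(p)} ‖b_n‖_{L^p([−1/2,1/2])} ]^p )^{1/p} ≤ C R^{1/p'} C_p(m)`
with `C = C(p,d)` independent of `m` and `R`. -/
theorem statement5 (d : ℕ) (hd : 2 ≤ d) (p : ℝ) (hp1 : 1 ≤ p) (hp2 : p ≤ 2) :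
    ∃ C : ℝ, 0 < C ∧
      ∀ R : ℝ, 0 < R →
        ∀ m : ℝ → ℂ, IntegrableOn m (Set.Ici 0) →
          (∑' n : {n : ℤ // n ≠ 0},
              (ENNReal.ofReal (jap (R * ((n : ℤ) : ℝ)) ^ alphaP d p) *
                eLpNorm (fun t : ℝ => (R : ℂ) * cosTE m (R * (t + ((n : ℤ) : ℝ))))
                  (ENNReal.ofReal p)
                  (volume.restrict (Set.Icc (-(1 : ℝ) / 2) (1 / 2)))) ^ p) ^ (1 / p) ≤
            ENNReal.ofReal (C * R ^ (1 - 1 / p)) * Cp d p m := by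
  have hp0 : (0:ℝ) < p := lt_of_lt_of_le one_pos hp1
  have hd2 : (2:ℝ) ≤ (d:ℝ) := by exact_mod_cast hd
  have hα0 : 0 ≤ alphaP d p := by
    have h2 : (1:ℝ)/2 ≤ 1/p := one_div_le_one_div_of_le hp0 hp2
    show (0:ℝ) ≤ ((d:ℝ) - 1) * (1 / p - 1 / 2)
    exact mul_nonneg (by linarith) (by linarith)
  refine ⟨2 ^ (alphaP d p + 1), Real.rpow_pos_of_pos two_pos _, fun R hR m _ => ?_⟩
  have hsum : (∑' n : {n : ℤ // n ≠ 0},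
      (ENNReal.ofReal (jap (R * ((n : ℤ) : ℝ)) ^ alphaP d p) *
        eLpNorm (fun t : ℝ => (R : ℂ) * cosTE m (R * (t + ((n : ℤ) : ℝ))))
          (ENNReal.ofReal p)
          (volume.restrict (Set.Icc (-(1 : ℝ) / 2) (1 / 2)))) ^ p)
      ≤ ENNReal.ofReal (R ^ (p-1) * 2 ^ (alphaP d p * p) * 2) *
        ∫⁻ t in Ioi (0:ℝ), Ff d p m t := by
    calc (∑' n : {n : ℤ // n ≠ 0},
        (ENNReal.ofReal (jap (R * ((n : ℤ) : ℝ)) ^ alphaP d p) *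
          eLpNorm (fun t : ℝ => (R : ℂ) * cosTE m (R * (t + ((n : ℤ) : ℝ))))
            (ENNReal.ofReal p)
            (volume.restrict (Set.Icc (-(1 : ℝ) / 2) (1 / 2)))) ^ p)
        ≤ ∑' n : {n : ℤ // n ≠ 0}, ENNReal.ofReal (R ^ (p-1) * 2 ^ (alphaP d p * p)) *
            ∫⁻ s in Ioo (R * (-(1:ℝ)/2) + R * ((n:ℤ):ℝ)) (R * (1/2) + R * ((n:ℤ):ℝ)),
              Gf d p m s :=
          ENNReal.tsum_le_tsum fun n => termbound d hp0 hα0 m hR n.2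
      _ = ENNReal.ofReal (R ^ (p-1) * 2 ^ (alphaP d p * p)) *
            ∑' n : {n : ℤ // n ≠ 0},
              ∫⁻ s in Ioo (R * (-(1:ℝ)/2) + R * ((n:ℤ):ℝ)) (R * (1/2) + R * ((n:ℤ):ℝ)),
                Gf d p m s := ENNReal.tsum_mul_left
      _ = ENNReal.ofReal (R ^ (p-1) * 2 ^ (alphaP d p * p)) *
            ∫⁻ s in ⋃ n : {n : ℤ // n ≠ 0},
              Ioo (R * (-(1:ℝ)/2) + R * ((n:ℤ):ℝ)) (R * (1/2) + R * ((n:ℤ):ℝ)),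
              Gf d p m s := by
          rw [lintegral_iUnion (fun n => measurableSet_Ioo) (Tdisj hR)]
      _ ≤ ENNReal.ofReal (R ^ (p-1) * 2 ^ (alphaP d p * p)) * ∫⁻ s, Gf d p m s :=
          mul_le_mul_right (setLIntegral_le_lintegral _ _) _
      _ = ENNReal.ofReal (R ^ (p-1) * 2 ^ (alphaP d p * p)) *
            (2 * ∫⁻ s in Ioi (0:ℝ), Gf d p m s) := by
          rw [myEven (Gf d p m) (fun x => by simp [Gf, abs_neg])]
      _ = ENNReal.ofReal (R ^ (p-1) * 2 ^ (alphaP d p * p) * 2) *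
            ∫⁻ s in Ioi (0:ℝ), Gf d p m s := by
          rw [ENNReal.ofReal_mul
            (by positivity : (0:ℝ) ≤ R ^ (p-1) * 2 ^ (alphaP d p * p)), ENNReal.ofReal_ofNat]
          ring
      _ = ENNReal.ofReal (R ^ (p-1) * 2 ^ (alphaP d p * p) * 2) *
            ∫⁻ t in Ioi (0:ℝ), Ff d p m t := by rw [GFeq]
  refine le_trans (ENNReal.rpow_le_rpow hsum (by positivity : (0:ℝ) ≤ 1/p)) ?_
  rw [ENNReal.mul_rpow_of_nonneg _ _ (by positivity : (0:ℝ) ≤ 1/p),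
    ENNReal.ofReal_rpow_of_nonneg (by positivity) (by positivity)]
  have hCp : (∫⁻ t in Ioi (0:ℝ), Ff d p m t) ^ ((1:ℝ)/p) = Cp d p m := rfl
  rw [hCp]
  refine mul_le_mul_left (ENNReal.ofReal_le_ofReal ?_) _
  have e1 : (R ^ (p-1)) ^ ((1:ℝ)/p) = R ^ (1 - 1/p) := by
    rw [← Real.rpow_mul hR.le]
    congr 1
    field_simp
  have e2 : ((2:ℝ) ^ (alphaP d p * p)) ^ ((1:ℝ)/p) = 2 ^ alphaP d p := by
    rw [← Real.rpow_mul (by norm_num : (0:ℝ) ≤ 2)]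
    congr 1
    field_simp
  rw [Real.mul_rpow (by positivity) (by norm_num),
    Real.mul_rpow (by positivity) (by positivity), e1, e2]
  have h2p : (2:ℝ) ^ ((1:ℝ)/p) ≤ 2 := by
    calc (2:ℝ) ^ ((1:ℝ)/p) ≤ 2 ^ (1:ℝ) :=
          Real.rpow_le_rpow_of_exponent_le one_le_two ((div_le_one hp0).mpr hp1)
      _ = 2 := Real.rpow_one 2
  rw [Real.rpow_add two_pos, Real.rpow_one]
  nlinarith [mul_nonneg (mul_nonneg (Real.rpow_nonneg hR.le (1-1/p))
      (Real.rpow_nonneg (by norm_num : (0:ℝ) ≤ 2) (alphaP d p)))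
      (by linarith : (0:ℝ) ≤ 2 - 2 ^ ((1:ℝ)/p)),
    Real.rpow_nonneg hR.le (1-1/p), Real.rpow_nonneg (by norm_num : (0:ℝ) ≤ 2) (alphaP d p)]
end
end

section
/- Let d ≥ 2 be an integer, 1 ≤ p ≤ 2, ε ∈ (0,1/2), and R > 0. Let m : [0,∞) → ℂ be integrable, with cosine transform m̂ extended evenly to ℝ. Then there is a constant C = C(p,d,ε), independent of m and R, such that ( ∫_{ε ≤ |t| ≤ 1/2} |R m̂(Rt)|^p dt )^{1/p} ≤ C R^{1/p' − α(p)} C_p(m). -/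
open MeasureTheory Real Set Filter
open scoped ENNReal

noncomputable section

lemma abs_le_jap (t : ℝ) : |t| ≤ jap t := by
  rw [jap, ← Real.sqrt_eq_rpow, ← Real.sqrt_sq_eq_abs]
  exact Real.sqrt_le_sqrt (by nlinarith)

lemma jap_continuous : Continuous jap :=
  (continuous_const.add (continuous_pow 2)).rpow_const fun _ => Or.inr (by norm_num)

lemma const_calc {p α ε R : ℝ} (hp : 0 < p) (hε : 0 < ε) (hR : 0 < R) :
    (2 * (R * (ε * R) ^ (-α)) ^ p * R⁻¹) ^ (1 / p)
      = 2 ^ (1 / p) * ε ^ (-α) * R ^ (1 - 1 / p - α) := by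
  have hεR : (0 : ℝ) < ε * R := mul_pos hε hR
  have hK : (0 : ℝ) < R * (ε * R) ^ (-α) := by positivity
  have hL : (0 : ℝ) < 2 * (R * (ε * R) ^ (-α)) ^ p * R⁻¹ := by positivity
  have hRt : (0 : ℝ) < 2 ^ (1 / p) * ε ^ (-α) * R ^ (1 - 1 / p - α) := by positivity
  rw [← Real.exp_log (Real.rpow_pos_of_pos hL _), ← Real.exp_log hRt]
  congr 1
  rw [Real.log_rpow hL, Real.log_mul (by positivity) (by positivity),
    Real.log_mul (by norm_num) (by positivity), Real.log_rpow hK,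
    Real.log_mul hR.ne' (by positivity), Real.log_rpow hεR,
    Real.log_mul hε.ne' hR.ne', Real.log_inv,
    Real.log_mul (by positivity) (by positivity),
    Real.log_mul (by positivity) (by positivity),
    Real.log_rpow (by norm_num : (0:ℝ) < 2), Real.log_rpow hε, Real.log_rpow hR]
  field_simp
  ring

/-- For `d ≥ 2`, `1 ≤ p ≤ 2`, `ε ∈ (0,1/2)`: there is `C = C(p,d,ε)`, independent of `m`
and `R`, so that `( ∫_{ε ≤ |t| ≤ 1/2} |R m̂(Rt)|^p dt )^{1/p} ≤ C R^{1/p' − α(p)} C_p(m)`. -/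
theorem statement6 (d : ℕ) (hd : 2 ≤ d) (p : ℝ) (hp1 : 1 ≤ p) (hp2 : p ≤ 2)
    (ε : ℝ) (hε : ε ∈ Set.Ioo (0 : ℝ) (1 / 2)) :
    ∃ C : ℝ, 0 < C ∧
      ∀ R : ℝ, 0 < R →
        ∀ m : ℝ → ℂ, IntegrableOn m (Set.Ici 0) →
          (∫⁻ t in {t : ℝ | ε ≤ |t| ∧ |t| ≤ 1 / 2},
              ENNReal.ofReal ((R * ‖cosTE m (R * t)‖) ^ p)) ^ (1 / p) ≤
            ENNReal.ofReal (C * R ^ (1 - 1 / p - alphaP d p)) * Cp d p m := by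
  obtain ⟨hε0, hεh⟩ := hε
  have hp0 : (0 : ℝ) < p := lt_of_lt_of_le one_pos hp1
  have h1p : (0 : ℝ) ≤ 1 / p := by positivity
  set α := alphaP d p with hαdef
  have hα0 : 0 ≤ α := by
    have hd1 : (2 : ℝ) ≤ (d : ℝ) := by exact_mod_cast hd
    have h2 : (1 : ℝ) / 2 ≤ 1 / p := one_div_le_one_div_of_le hp0 hp2
    have := mul_nonneg (by linarith : (0:ℝ) ≤ (d:ℝ) - 1) (by linarith : (0:ℝ) ≤ 1/p - 1/2)
    simpa [hαdef, alphaP] using this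
  refine ⟨2 ^ (1 / p) * ε ^ (-α), by positivity, ?_⟩
  intro R hR m hm
  have hint : IntegrableOn m (Set.Ioi 0) := hm.mono_set Set.Ioi_subset_Ici_self
  -- continuity of the cosine transform
  have hcont : Continuous (cosT m) := by
    apply continuous_of_dominated (bound := fun l => ‖m l‖)
    · intro t
      exact hint.aestronglyMeasurable.mul
        ((Complex.continuous_ofReal.comp
          (Real.continuous_cos.comp (by fun_prop))).aestronglyMeasurable)
    · intro t
      filter_upwards with l
      rw [norm_mul]
      calc ‖m l‖ * ‖((Real.cos (2 * π * l * t)) : ℂ)‖ ≤ ‖m l‖ * 1 := by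
            apply mul_le_mul_of_nonneg_left _ (norm_nonneg _)
            rw [Complex.norm_real, Real.norm_eq_abs]
            exact Real.abs_cos_le_one _
        _ = ‖m l‖ := mul_one _
    · exact hint.norm
    · filter_upwards with l
      fun_prop
  set g : ℝ → ℝ≥0∞ := fun s => ENNReal.ofReal ((jap s ^ α * ‖cosT m s‖) ^ p)
    with hgdef
  have hg : Measurable g := by
    apply ENNReal.measurable_ofReal.comp
    apply Continuous.measurable
    exact ((jap_continuous.rpow_const fun x => Or.inl (jap_pos x).ne').mul
      (continuous_norm.comp hcont)).rpow_const fun x => Or.inr hp0.le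
  set I₀ : ℝ≥0∞ := ∫⁻ s in Set.Ioi (0 : ℝ), g s with hI₀def
  have hCp : Cp d p m = I₀ ^ (1 / p) := rfl
  set K : ℝ := R * (ε * R) ^ (-α) with hKdef
  have hK : 0 < K := by positivity
  -- pointwise bound
  have hpt : ∀ s : ℝ, ε * R ≤ s →
      ENNReal.ofReal ((R * ‖cosT m s‖) ^ p) ≤ ENNReal.ofReal (K ^ p) * g s := by
    intro s hs
    have hA : (0 : ℝ) ≤ ‖cosT m s‖ := norm_nonneg _
    have hjs : (ε * R) ^ α ≤ jap s ^ α := by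
      apply Real.rpow_le_rpow (by positivity) _ hα0
      calc ε * R ≤ s := hs
        _ ≤ |s| := le_abs_self s
        _ ≤ jap s := abs_le_jap s
    have h1 : (1 : ℝ) ≤ (ε * R) ^ (-α) * jap s ^ α := by
      rw [Real.rpow_neg (by positivity), inv_mul_eq_div, le_div_iff₀ (by positivity)]
      simpa using hjs
    have hjn : (0 : ℝ) ≤ jap s ^ α := (Real.rpow_pos_of_pos (jap_pos s) _).le
    have h2 : R * ‖cosT m s‖ ≤ K * (jap s ^ α * ‖cosT m s‖) := by
      have h3 : R ≤ R * ((ε * R) ^ (-α) * jap s ^ α) := by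
        nlinarith
      calc R * ‖cosT m s‖
          ≤ (R * ((ε * R) ^ (-α) * jap s ^ α)) * ‖cosT m s‖ :=
            mul_le_mul_of_nonneg_right h3 hA
        _ = K * (jap s ^ α * ‖cosT m s‖) := by rw [hKdef]; ring
    calc ENNReal.ofReal ((R * ‖cosT m s‖) ^ p)
        ≤ ENNReal.ofReal ((K * (jap s ^ α * ‖cosT m s‖)) ^ p) :=
          ENNReal.ofReal_le_ofReal
            (Real.rpow_le_rpow (by positivity) h2 hp0.le)
      _ = ENNReal.ofReal (K ^ p) * g s := by
          rw [Real.mul_rpow hK.le (mul_nonneg hjn hA),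
            ENNReal.ofReal_mul (Real.rpow_nonneg hK.le _)]
  -- scaling of lintegral
  have key : ∀ c : ℝ, c ≠ 0 → ∀ h : ℝ → ℝ≥0∞, Measurable h →
      (∫⁻ t, h (c * t)) = ENNReal.ofReal |c⁻¹| * ∫⁻ s, h s := by
    intro c hc h hh
    rw [← lintegral_map hh (measurable_const_mul c), Real.map_volume_mul_left hc,
      lintegral_smul_measure, smul_eq_mul]
  have hposint : ∫⁻ t in Set.Ioi (0 : ℝ), g (R * t) = ENNReal.ofReal R⁻¹ * I₀ := by
    have hind : ∀ t : ℝ, (Set.Ioi (0:ℝ)).indicator (fun u => g (R * u)) t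
        = (Set.Ioi (0:ℝ)).indicator g (R * t) := by
      intro t
      by_cases ht : (0 : ℝ) < t
      · rw [Set.indicator_of_mem (Set.mem_Ioi.mpr ht),
          Set.indicator_of_mem (Set.mem_Ioi.mpr (mul_pos hR ht))]
      · rw [Set.indicator_of_notMem (by simpa using ht), Set.indicator_of_notMem]
        simp only [Set.mem_Ioi, not_lt] at ht ⊢
        nlinarith
    rw [← lintegral_indicator measurableSet_Ioi]
    calc ∫⁻ t, (Set.Ioi (0:ℝ)).indicator (fun u => g (R * u)) t
        = ∫⁻ t, (Set.Ioi (0:ℝ)).indicator g (R * t) := lintegral_congr hind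
      _ = ENNReal.ofReal |R⁻¹| * ∫⁻ s, (Set.Ioi (0:ℝ)).indicator g s :=
          key R hR.ne' _ (hg.indicator measurableSet_Ioi)
      _ = ENNReal.ofReal R⁻¹ * I₀ := by
          rw [abs_of_pos (inv_pos.mpr hR), lintegral_indicator measurableSet_Ioi]
  have hnegint : ∫⁻ t in Set.Iio (0 : ℝ), g (-R * t) = ENNReal.ofReal R⁻¹ * I₀ := by
    have hind : ∀ t : ℝ, (Set.Iio (0:ℝ)).indicator (fun u => g (-R * u)) t
        = (Set.Ioi (0:ℝ)).indicator g (-R * t) := by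
      intro t
      by_cases ht : t < (0 : ℝ)
      · rw [Set.indicator_of_mem (Set.mem_Iio.mpr ht),
          Set.indicator_of_mem (Set.mem_Ioi.mpr (by nlinarith))]
      · rw [Set.indicator_of_notMem (by simpa using ht), Set.indicator_of_notMem]
        simp only [Set.mem_Ioi, not_lt] at ht ⊢
        nlinarith
    rw [← lintegral_indicator measurableSet_Iio]
    calc ∫⁻ t, (Set.Iio (0:ℝ)).indicator (fun u => g (-R * u)) t
        = ∫⁻ t, (Set.Ioi (0:ℝ)).indicator g (-R * t) := lintegral_congr hind
      _ = ENNReal.ofReal |(-R)⁻¹| * ∫⁻ s, (Set.Ioi (0:ℝ)).indicator g s :=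
          key (-R) (by simpa using hR.ne') _ (hg.indicator measurableSet_Ioi)
      _ = ENNReal.ofReal R⁻¹ * I₀ := by
          rw [abs_inv, abs_neg, abs_of_pos hR, lintegral_indicator measurableSet_Ioi]
  set S : Set ℝ := {t : ℝ | ε ≤ |t| ∧ |t| ≤ 1 / 2} with hSdef
  set F : ℝ → ℝ≥0∞ := fun t => ENNReal.ofReal ((R * ‖cosTE m (R * t)‖) ^ p)
    with hFdef
  have hposbound : ∫⁻ t in S ∩ Set.Ioi 0, F t
      ≤ ENNReal.ofReal (K ^ p) * (ENNReal.ofReal R⁻¹ * I₀) := by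
    have hmono : ∀ t ∈ S ∩ Set.Ioi 0, F t ≤ ENNReal.ofReal (K ^ p) * g (R * t) := by
      rintro t ⟨⟨ht1, _⟩, ht0⟩
      simp only [Set.mem_Ioi] at ht0
      have h1 : cosTE m (R * t) = cosT m (R * t) := by
        rw [cosTE, abs_of_pos (mul_pos hR ht0)]
      rw [hFdef]
      simp only
      rw [h1]
      apply hpt
      rw [abs_of_pos ht0] at ht1
      nlinarith
    calc ∫⁻ t in S ∩ Set.Ioi 0, F t
        ≤ ∫⁻ t in S ∩ Set.Ioi 0, ENNReal.ofReal (K ^ p) * g (R * t) :=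
          setLIntegral_mono ((hg.comp (measurable_const_mul R)).const_mul _) hmono
      _ ≤ ∫⁻ t in Set.Ioi 0, ENNReal.ofReal (K ^ p) * g (R * t) :=
          lintegral_mono_set Set.inter_subset_right
      _ = ENNReal.ofReal (K ^ p) * ∫⁻ t in Set.Ioi 0, g (R * t) :=
          lintegral_const_mul _ (hg.comp (measurable_const_mul R))
      _ = ENNReal.ofReal (K ^ p) * (ENNReal.ofReal R⁻¹ * I₀) := by rw [hposint]
  have hnegbound : ∫⁻ t in S ∩ Set.Iio 0, F t
      ≤ ENNReal.ofReal (K ^ p) * (ENNReal.ofReal R⁻¹ * I₀) := by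
    have hmono : ∀ t ∈ S ∩ Set.Iio 0, F t ≤ ENNReal.ofReal (K ^ p) * g (-R * t) := by
      rintro t ⟨⟨ht1, _⟩, ht0⟩
      simp only [Set.mem_Iio] at ht0
      have h1 : cosTE m (R * t) = cosT m (-R * t) := by
        rw [cosTE, abs_of_neg (by nlinarith : R * t < 0)]
        ring_nf
      rw [hFdef]
      simp only
      rw [h1]
      apply hpt
      rw [abs_of_neg ht0] at ht1
      nlinarith
    calc ∫⁻ t in S ∩ Set.Iio 0, F t
        ≤ ∫⁻ t in S ∩ Set.Iio 0, ENNReal.ofReal (K ^ p) * g (-R * t) :=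
          setLIntegral_mono ((hg.comp (measurable_const_mul (-R))).const_mul _) hmono
      _ ≤ ∫⁻ t in Set.Iio 0, ENNReal.ofReal (K ^ p) * g (-R * t) :=
          lintegral_mono_set Set.inter_subset_right
      _ = ENNReal.ofReal (K ^ p) * ∫⁻ t in Set.Iio 0, g (-R * t) :=
          lintegral_const_mul _ (hg.comp (measurable_const_mul (-R)))
      _ = ENNReal.ofReal (K ^ p) * (ENNReal.ofReal R⁻¹ * I₀) := by rw [hnegint]
  have hSsub : S ⊆ Set.Iio 0 ∪ Set.Ioi 0 := by
    intro t ht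
    rcases lt_trichotomy t 0 with h | h | h
    · exact Or.inl h
    · exfalso; rw [hSdef] at ht; simp [h] at ht; linarith
    · exact Or.inr h
  have hSdecomp : S = (S ∩ Set.Iio 0) ∪ (S ∩ Set.Ioi 0) := by
    rw [← Set.inter_union_distrib_left, Set.inter_eq_self_of_subset_left hSsub]
  have htotal : (∫⁻ t in S, F t)
      ≤ 2 * (ENNReal.ofReal (K ^ p) * (ENNReal.ofReal R⁻¹ * I₀)) := by
    calc ∫⁻ t in S, F t = ∫⁻ t in (S ∩ Set.Iio 0) ∪ (S ∩ Set.Ioi 0), F t := by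
          rw [← hSdecomp]
      _ ≤ (∫⁻ t in S ∩ Set.Iio 0, F t) + ∫⁻ t in S ∩ Set.Ioi 0, F t :=
          lintegral_union_le _ _ _
      _ ≤ ENNReal.ofReal (K ^ p) * (ENNReal.ofReal R⁻¹ * I₀)
            + ENNReal.ofReal (K ^ p) * (ENNReal.ofReal R⁻¹ * I₀) :=
          add_le_add hnegbound hposbound
      _ = 2 * (ENNReal.ofReal (K ^ p) * (ENNReal.ofReal R⁻¹ * I₀)) := (two_mul _).symm
  calc (∫⁻ t in S, F t) ^ (1 / p)
      ≤ (2 * (ENNReal.ofReal (K ^ p) * (ENNReal.ofReal R⁻¹ * I₀))) ^ (1 / p) :=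
        ENNReal.rpow_le_rpow htotal h1p
    _ = (2 * ENNReal.ofReal (K ^ p) * ENNReal.ofReal R⁻¹) ^ (1 / p) * I₀ ^ (1 / p) := by
        rw [← mul_assoc, ← mul_assoc, ENNReal.mul_rpow_of_nonneg _ _ h1p]
    _ = ENNReal.ofReal (2 ^ (1 / p) * ε ^ (-α) * R ^ (1 - 1 / p - α)) * Cp d p m := by
        rw [hCp]
        congr 1
        rw [show (2 : ℝ≥0∞) = ENNReal.ofReal 2 by simp,
          ← ENNReal.ofReal_mul (by norm_num),
          ← ENNReal.ofReal_mul (by positivity),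
          ENNReal.ofReal_rpow_of_pos (by positivity),
          const_calc hp0 hε0 hR]
end
end

section
/- Let m : [0,∞) → ℂ be regulated, bounded, and integrable, and suppose its cosine transform m̂ is integrable on (0,∞); extend m̂ evenly to ℝ. Fix R > 0 and define the periodization b_R(t) = Σ_{n∈ℤ} R m̂(R(t+n)) for t ∈ [−1/2, 1/2] (the series converges absolutely for a.e. t and defines an integrable function on [−1/2,1/2]). Then for every k ∈ ℤ, ∫_{−1/2}^{1/2} b_R(t) e^{−2πikt} dt = m(|k|/R) / 2. -/
open MeasureTheory Real Set Filter
open scoped ENNReal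

noncomputable section

open Complex
open scoped NNReal FourierTransform RealInnerProductSpace


/-- `m : [0,∞) → ℂ` is regulated. -/
def Regulated (m : ℝ → ℂ) : Prop :=
  ∀ l₀ : ℝ, 0 ≤ l₀ →
    Filter.Tendsto (fun δ : ℝ => ⨍ l in {l : ℝ | 0 ≤ l ∧ |l - l₀| ≤ δ}, m l)
      (nhdsWithin 0 (Set.Ioi 0)) (nhds (m l₀))




lemma integral_comp_neg'' (f : ℝ → ℂ) : ∫ x : ℝ, f (-x) = ∫ x, f x := by
  have h := (Homeomorph.neg ℝ).measurableEmbedding.integral_map (μ := (volume : Measure ℝ)) f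
  have h2 : Measure.map (⇑(Homeomorph.neg ℝ)) (volume : Measure ℝ) = volume := by
    show Measure.map Neg.neg (volume : Measure ℝ) = volume
    exact Measure.map_neg_eq_self _
  rw [h2] at h
  exact h.symm

lemma odd_integral {f : ℝ → ℂ} (hf : ∀ x, f (-x) = -f x) : ∫ x, f x = 0 := by
  have h := integral_comp_neg'' f
  simp_rw [hf, integral_neg] at h
  linear_combination (-1/2 : ℂ) * h

lemma even_integrable {f : ℝ → ℂ} (hf : ∀ x, f (-x) = f x)
    (hint : IntegrableOn f (Set.Ioi 0)) : Integrable f := by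
  have hIic : IntegrableOn f (Set.Iic 0) := by
    rw [← Measure.map_neg_eq_self (volume : Measure ℝ)]
    have e : MeasurableEmbedding fun x : ℝ => -x := (Homeomorph.neg ℝ).measurableEmbedding
    rw [e.integrableOn_map_iff]
    simp_rw [Function.comp_def, hf, neg_preimage, neg_Iic, neg_zero]
    exact (integrableOn_Ici_iff_integrableOn_Ioi).mpr hint
  have : IntegrableOn f (Set.Iic 0 ∪ Set.Ioi 0) := hIic.union hint
  rwa [Set.Iic_union_Ioi, integrableOn_univ] at this

lemma even_integral {f : ℝ → ℂ} (hf : ∀ x, f (-x) = f x) (hi : Integrable f) :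
    ∫ x, f x = 2 * ∫ x in Set.Ioi (0:ℝ), f x := by
  have hsplit : ∫ x, f x = (∫ x in Set.Iic (0:ℝ), f x) + ∫ x in Set.Ioi (0:ℝ), f x := by
    rw [← setIntegral_union (Set.Iic_disjoint_Ioi le_rfl) measurableSet_Ioi
      hi.integrableOn hi.integrableOn, Set.Iic_union_Ioi, setIntegral_univ]
  have h2 := integral_comp_neg_Ioi (0:ℝ) f
  simp only [hf, neg_zero] at h2
  rw [hsplit, ← h2]; ring


lemma flipF {f g : ℝ → ℂ} (hf : Integrable f) (hg : Integrable g) :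
    ∫ x, (𝓕 f) x * g x = ∫ x, f x * (𝓕 g) x := by
  have hL : (innerₗ ℝ).flip = innerₗ ℝ := by
    apply LinearMap.ext; intro x; apply LinearMap.ext; intro y
    simp [real_inner_comm, mul_comm]
  have h := VectorFourier.integral_bilin_fourierIntegral_eq_flip (E := ℂ) (F := ℂ) (G := ℂ)
    (μ := (volume : Measure ℝ)) (ν := (volume : Measure ℝ)) (L := innerₗ ℝ)
    (ContinuousLinearMap.mul ℂ ℂ) Real.continuous_fourierChar continuous_inner hf hg
  rw [hL] at h
  exact h

lemma flipFinv {f g : ℝ → ℂ} (hf : Integrable f) (hg : Integrable g) :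
    ∫ x, (𝓕⁻ f) x * g x = ∫ x, f x * (𝓕⁻ g) x := by
  have hL : (-innerₗ ℝ).flip = -innerₗ ℝ := by
    apply LinearMap.ext; intro x; apply LinearMap.ext; intro y
    simp [real_inner_comm, mul_comm]
  have hc : Continuous fun p : ℝ × ℝ => (-innerₗ ℝ) p.1 p.2 := by
    simp only [LinearMap.neg_apply]
    exact continuous_inner.neg
  have h := VectorFourier.integral_bilin_fourierIntegral_eq_flip (E := ℂ) (F := ℂ) (G := ℂ)
    (μ := (volume : Measure ℝ)) (ν := (volume : Measure ℝ)) (L := -innerₗ ℝ)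
    (ContinuousLinearMap.mul ℂ ℂ) Real.continuous_fourierChar hc hf hg
  rw [hL] at h
  exact h

/-- A smooth compactly supported real function, as a complex Schwartz map. -/
def toSchwartz (φ : ℝ → ℝ) (hφ : ContDiff ℝ ((⊤ : ℕ∞) : WithTop ℕ∞) φ) (h2 : HasCompactSupport φ) : SchwartzMap ℝ ℂ where
  toFun := fun x => (φ x : ℂ)
  smooth' := Complex.ofRealCLM.contDiff.comp hφ
  decay' := by
    intro k n
    have hsupp : HasCompactSupport (fun x => (φ x : ℂ)) :=
      h2.comp_left (g := fun r : ℝ => (r : ℂ)) (by simp)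
    have hcd : ContDiff ℝ ((⊤ : ℕ∞) : WithTop ℕ∞) (fun x => (φ x : ℂ)) := Complex.ofRealCLM.contDiff.comp hφ
    have h3 : HasCompactSupport (iteratedFDeriv ℝ n (fun x => (φ x : ℂ))) :=
      hsupp.iteratedFDeriv n
    have hcont : Continuous fun x => ‖x‖ ^ k * ‖iteratedFDeriv ℝ n (fun y => (φ y : ℂ)) x‖ :=
      ((continuous_norm.pow k).mul
        (hcd.continuous_iteratedFDeriv (by exact_mod_cast le_top)).norm)
    have h4 : HasCompactSupport fun x => ‖x‖ ^ k * ‖iteratedFDeriv ℝ n (fun y => (φ y : ℂ)) x‖ :=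
      (h3.norm).mul_left
    obtain ⟨C, hC⟩ := hcont.bounded_above_of_compact_support h4
    refine ⟨C, fun x => ?_⟩
    have := hC x
    rwa [Real.norm_eq_abs, _root_.abs_of_nonneg (by positivity)] at this

lemma toSchwartz_apply (φ : ℝ → ℝ) (hφ : ContDiff ℝ ((⊤ : ℕ∞) : WithTop ℕ∞) φ) (h2 : HasCompactSupport φ) (x : ℝ) :
    toSchwartz φ hφ h2 x = (φ x : ℂ) := rfl

variable {m : ℝ → ℂ}

lemma cosT_continuous (hint : IntegrableOn m (Set.Ici 0)) : Continuous (cosT m) := by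
  have hint' : IntegrableOn m (Set.Ioi 0) := hint.mono_set Set.Ioi_subset_Ici_self
  apply MeasureTheory.continuous_of_dominated (bound := fun l => ‖m l‖)
  · intro t
    exact hint'.1.mul (Continuous.aestronglyMeasurable (by fun_prop))
  · intro t
    filter_upwards with l
    rw [norm_mul]
    calc ‖m l‖ * ‖(Real.cos (2 * Real.pi * l * t) : ℂ)‖
        ≤ ‖m l‖ * 1 := by
          gcongr
          rw [Complex.norm_real, Real.norm_eq_abs]
          exact Real.abs_cos_le_one _
      _ = ‖m l‖ := mul_one _
  · exact hint'.norm
  · filter_upwards with l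
    fun_prop

lemma cosTE_continuous (hint : IntegrableOn m (Set.Ici 0)) : Continuous (cosTE m) :=
  (cosT_continuous hint).comp continuous_abs

lemma cosTE_even (t : ℝ) : cosTE m (-t) = cosTE m t := by simp [cosTE, abs_neg]

lemma even_integrable' {f : ℝ → ℂ} (hf : ∀ x, f (-x) = f x)
    (hint : IntegrableOn f (Set.Ioi 0)) : Integrable f := by
  have hIic : IntegrableOn f (Set.Iic 0) := by
    rw [← Measure.map_neg_eq_self (volume : Measure ℝ)]
    have e : MeasurableEmbedding fun x : ℝ => -x := (Homeomorph.neg ℝ).measurableEmbedding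
    rw [e.integrableOn_map_iff]
    simp_rw [Function.comp_def, hf, Set.neg_preimage, Set.neg_Iic, neg_zero]
    exact (integrableOn_Ici_iff_integrableOn_Ioi).mpr hint
  have : IntegrableOn f (Set.Iic 0 ∪ Set.Ioi 0) := hIic.union hint
  rwa [Set.Iic_union_Ioi, integrableOn_univ] at this

lemma cosTE_integrable (hhat : IntegrableOn (cosT m) (Set.Ioi 0)) :
    Integrable (cosTE m) := by
  apply even_integrable' cosTE_even
  apply hhat.congr_fun _ measurableSet_Ioi
  intro l hl
  simp [cosTE, _root_.abs_of_pos (Set.mem_Ioi.mp hl)]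

-- measurability of m_e
lemma me_aesm (hint : IntegrableOn m (Set.Ici 0)) :
    AEStronglyMeasurable (fun x => m |x|) (volume : Measure ℝ) := by
  have hq : Measure.QuasiMeasurePreserving (fun x : ℝ => |x|) (volume : Measure ℝ)
      ((volume : Measure ℝ).restrict (Set.Ici 0)) := by
    refine ⟨measurable_abs, ?_⟩
    refine Measure.AbsolutelyContinuous.mk (fun s hs h0 => ?_)
    rw [Measure.restrict_apply hs] at h0
    rw [Measure.map_apply measurable_abs hs]
    have hsub : (fun x : ℝ => |x|) ⁻¹' s ⊆ (s ∩ Set.Ici 0) ∪ (-(s ∩ Set.Ici 0)) := by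
      intro x hx
      simp only [Set.mem_preimage] at hx
      rcases le_or_gt 0 x with h | h
      · left; exact ⟨by rwa [_root_.abs_of_nonneg h] at hx, h⟩
      · right
        refine Set.mem_neg.mpr ?_
        constructor
        · rwa [_root_.abs_of_neg h] at hx
        · simpa using h.le
    refine measure_mono_null hsub ?_
    rw [measure_union_null_iff]
    constructor
    · exact h0
    · have hneg : -(s ∩ Set.Ici 0) = Neg.neg ⁻¹' (s ∩ Set.Ici 0) := by
        rw [Set.neg_preimage]
      rw [hneg, ← Measure.map_apply measurable_neg (hs.inter measurableSet_Ici),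
        Measure.map_neg_eq_self]
      exact h0
  exact hint.1.comp_quasiMeasurePreserving hq

lemma me_even : ∀ x : ℝ, m |(-x)| = m |x| := fun x => by rw [abs_neg]

lemma me_integrableOn_Ioi (hint : IntegrableOn m (Set.Ici 0)) :
    IntegrableOn (fun x => m |x|) (Set.Ioi 0) := by
  apply (hint.mono_set Set.Ioi_subset_Ici_self).congr_fun _ measurableSet_Ioi
  intro l hl
  simp [_root_.abs_of_pos (Set.mem_Ioi.mp hl)]

lemma me_integrable (hint : IntegrableOn m (Set.Ici 0)) :
    Integrable (fun x => m |x|) := even_integrable' me_even (me_integrableOn_Ioi hint)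

lemma fourier_me (hint : IntegrableOn m (Set.Ici 0)) (t : ℝ) :
    𝓕 (fun x => m |x|) t = 2 * cosTE m t := by
  have hme : Integrable (fun x => m |x|) := me_integrable hint
  have h1 : Integrable (fun v => ((Real.cos (2 * π * v * t) : ℂ)) * m |v|) := by
    apply hme.bdd_mul (c := 1) (Continuous.aestronglyMeasurable (by fun_prop))
    exact Filter.Eventually.of_forall fun v => by rw [Complex.norm_real, Real.norm_eq_abs]; exact Real.abs_cos_le_one _
  have h2 : Integrable (fun v => ((Real.sin (2 * π * v * t) : ℂ) * Complex.I) * m |v|) := by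
    apply hme.bdd_mul (c := 1) (Continuous.aestronglyMeasurable (by fun_prop))
    refine Filter.Eventually.of_forall fun v => ?_
    rw [norm_mul, Complex.norm_I, mul_one, Complex.norm_real, Real.norm_eq_abs]
    exact Real.abs_sin_le_one _
  rw [Real.fourier_real_eq_integral_exp_smul]
  have hsplit : ∀ v : ℝ, Complex.exp (((-2 * π * v * t : ℝ) : ℂ) * Complex.I) • m |v| =
      ((Real.cos (2 * π * v * t) : ℂ)) * m |v| -
        ((Real.sin (2 * π * v * t) : ℂ) * Complex.I) * m |v| := by
    intro v
    rw [smul_eq_mul, Complex.exp_mul_I, ← Complex.ofReal_cos, ← Complex.ofReal_sin]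
    have e1 : (-2 * π * v * t : ℝ) = -(2 * π * v * t) := by ring
    rw [e1, Real.cos_neg, Real.sin_neg]
    push_cast
    ring
  simp_rw [hsplit]
  rw [integral_sub h1 h2]
  have hodd : ∫ v : ℝ, ((Real.sin (2 * π * v * t) : ℂ) * Complex.I) * m |v| = 0 := by
    apply odd_integral
    intro x
    have e1 : (2 * π * (-x) * t : ℝ) = -(2 * π * x * t) := by ring
    rw [e1, Real.sin_neg, abs_neg]
    push_cast
    ring
  have heven : ∫ v : ℝ, ((Real.cos (2 * π * v * t) : ℂ)) * m |v| = 2 * cosT m |t| := by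
    rw [even_integral _ h1]
    · congr 1
      rw [cosT]
      apply setIntegral_congr_fun measurableSet_Ioi
      intro v hv
      dsimp only
      have hv' : (0:ℝ) < v := hv
      rw [_root_.abs_of_pos hv']
      have : Real.cos (2 * π * v * |t|) = Real.cos (2 * π * v * t) := by
        rcases abs_cases t with ⟨h, _⟩ | ⟨h, _⟩
        · rw [h]
        · rw [h]
          have e1 : (2 * π * v * -t : ℝ) = -(2 * π * v * t) := by ring
          rw [e1, Real.cos_neg]
      rw [this, mul_comm]
    · intro x
      have e1 : (2 * π * (-x) * t : ℝ) = -(2 * π * x * t) := by ring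
      rw [e1, Real.cos_neg, abs_neg]
  rw [hodd, heven, sub_zero, cosTE]


lemma S_eq_Icc (x δ : ℝ) : {l : ℝ | 0 ≤ l ∧ |l - x| ≤ δ} = Set.Icc (max 0 (x - δ)) (x + δ) := by
  ext l
  simp only [Set.mem_setOf_eq, Set.mem_Icc, abs_le, max_le_iff]
  constructor
  · rintro ⟨h0, h1, h2⟩
    exact ⟨⟨h0, by linarith⟩, by linarith⟩
  · rintro ⟨⟨h0, h1⟩, h2⟩
    exact ⟨h0, by linarith, by linarith⟩

lemma avg_tendsto {g : ℝ → ℂ} (hg : Continuous g) {x : ℝ} (hx : 0 ≤ x) :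
    Filter.Tendsto (fun δ : ℝ => ⨍ l in {l : ℝ | 0 ≤ l ∧ |l - x| ≤ δ}, g l)
      (nhdsWithin 0 (Set.Ioi 0)) (nhds (g x)) := by
  rw [Metric.tendsto_nhds]
  intro ε hε
  obtain ⟨δ₀, hδ₀, hδ₀'⟩ := Metric.continuousAt_iff.mp (hg.continuousAt (x := x)) (ε/2) (by linarith)
  filter_upwards [Ioo_mem_nhdsGT_of_mem (Set.mem_Ico.mpr ⟨le_refl (0:ℝ), half_pos hδ₀⟩)]
    with δ hδ
  obtain ⟨hδpos, hδlt⟩ := hδ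
  set a := max 0 (x - δ) with ha
  set b := x + δ with hb
  have hab : a < b := by
    apply max_lt <;> [linarith; linarith]
  have haxδ : x - δ ≤ a := le_max_right _ _
  have hax : a ≤ x := by
    apply max_le hx (by linarith)
  rw [S_eq_Icc]
  have hvol : volume.real (Set.Icc a b) = b - a := by
    show (volume (Set.Icc a b)).toReal = b - a
    rw [Real.volume_Icc, ENNReal.toReal_ofReal (by linarith)]
  have hvolpos : 0 < b - a := by linarith
  have hgi : IntegrableOn g (Set.Icc a b) := hg.integrableOn_Icc
  have key : (⨍ l in Set.Icc a b, g l) - g x = (b - a)⁻¹ • ∫ l in Set.Icc a b, (g l - g x) := by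
    rw [setAverage_eq, hvol, integral_sub hgi ((integrableOn_const_iff).mpr (Or.inr (by
      rw [Real.volume_Icc]; exact ENNReal.ofReal_lt_top))), setIntegral_const, hvol,
      smul_sub, smul_smul, inv_mul_cancel₀ (ne_of_gt hvolpos), one_smul]
  have hbound : ‖∫ l in Set.Icc a b, (g l - g x)‖ ≤ (ε/2) * (b - a) := by
    have := norm_setIntegral_le_of_norm_le_const (C := ε/2)
      (s := Set.Icc a b) (f := fun l => g l - g x)
      (by rw [Real.volume_Icc]; exact ENNReal.ofReal_lt_top) ?_
    · rwa [hvol] at this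
    · intro l hl
      have hll : |l - x| ≤ δ := abs_le.mpr ⟨by linarith [hl.1, haxδ, le_trans haxδ hl.1], by
        have := hl.2; simp only [hb] at this ⊢; linarith⟩
      have h1 : dist l x < δ₀ := by
        rw [Real.dist_eq]
        calc |l - x| ≤ δ := hll
          _ < δ₀ := by linarith
      have := hδ₀' h1
      rw [dist_eq_norm] at this
      exact this.le
  rw [dist_eq_norm, key]
  rw [norm_smul, Real.norm_eq_abs, _root_.abs_of_pos (inv_pos.mpr hvolpos)]
  calc (b - a)⁻¹ * ‖∫ l in Set.Icc a b, (g l - g x)‖ ≤ (b - a)⁻¹ * ((ε/2) * (b - a)) := by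
        gcongr
    _ = ε/2 := by field_simp
    _ < ε := by linarith

lemma regulated_eq {m g : ℝ → ℂ} (hg : Continuous g)
    (hae : (fun x => m |x|) =ᵐ[(volume : Measure ℝ)] g)
    (hreg : Regulated m) : ∀ x : ℝ, 0 ≤ x → m x = g x := by
  intro x hx
  have h1 := hreg x hx
  have h3 := avg_tendsto hg hx
  have h2 : ∀ δ : ℝ, (⨍ l in {l : ℝ | 0 ≤ l ∧ |l - x| ≤ δ}, m l)
      = ⨍ l in {l : ℝ | 0 ≤ l ∧ |l - x| ≤ δ}, g l := by
    intro δ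
    apply average_congr
    have hS : MeasurableSet {l : ℝ | 0 ≤ l ∧ |l - x| ≤ δ} := by
      rw [S_eq_Icc]; exact measurableSet_Icc
    have hme : (fun l : ℝ => m |l|) =ᵐ[volume.restrict {l : ℝ | 0 ≤ l ∧ |l - x| ≤ δ}] g :=
      ae_restrict_of_ae hae
    have hmm : ∀ᵐ l ∂(volume.restrict {l : ℝ | 0 ≤ l ∧ |l - x| ≤ δ}), m l = m |l| := by
      filter_upwards [ae_restrict_mem hS] with l hl
      rw [_root_.abs_of_nonneg hl.1]
    filter_upwards [hme, hmm] with l e1 e2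
    rw [e2, e1]
  rw [show (fun δ : ℝ => ⨍ l in {l : ℝ | 0 ≤ l ∧ |l - x| ≤ δ}, m l)
      = (fun δ : ℝ => ⨍ l in {l : ℝ | 0 ≤ l ∧ |l - x| ≤ δ}, g l) from funext h2] at h1
  exact tendsto_nhds_unique h1 h3

lemma me_ae_eq (hint : IntegrableOn m (Set.Ici 0))
    (hhat : IntegrableOn (cosT m) (Set.Ioi 0)) :
    (fun x => m |x|) =ᵐ[(volume : Measure ℝ)] 𝓕⁻ (fun t => (2:ℂ) * cosTE m t) := by
  set h : ℝ → ℂ := fun t => (2:ℂ) * cosTE m t with hdef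
  have hh_int : Integrable h := (cosTE_integrable hhat).const_mul 2
  have hme_int : Integrable (fun x => m |x|) := me_integrable hint
  have hFme : 𝓕 (fun x => m |x|) = h := funext (fourier_me hint)
  have hgc : Continuous (𝓕⁻ h) := by
    have hc : Continuous fun p : ℝ × ℝ => (-innerₗ ℝ) p.1 p.2 := by
      simp only [LinearMap.neg_apply]
      exact continuous_inner.neg
    exact VectorFourier.fourierIntegral_continuous Real.continuous_fourierChar hc hh_int
  apply ae_eq_of_integral_contDiff_smul_eq hme_int.locallyIntegrable
    hgc.locallyIntegrable
  intro φ hφ hφs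
  set φc : ℝ → ℂ := fun x => (φ x : ℂ) with hφcdef
  set φS : SchwartzMap ℝ ℂ := toSchwartz φ hφ hφs with hφSdef
  have hφS_coe : ⇑φS = φc := rfl
  have hφc_int : Integrable φc := by rw [← hφS_coe]; exact φS.integrable
  set ψ : SchwartzMap ℝ ℂ := 𝓕⁻ φS with hψdef
  have hψ_coe : ⇑ψ = 𝓕⁻ φc := by
    rw [hψdef, SchwartzMap.fourierInv_coe, hφS_coe]
  have hψ_int : Integrable (𝓕⁻ φc) := by rw [← hψ_coe]; exact ψ.integrable
  have hFφc_int : Integrable (𝓕 φc) := by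
    have := (𝓕 φS).integrable (μ := (volume : Measure ℝ))
    rwa [SchwartzMap.fourier_coe, hφS_coe] at this
  have hinv : 𝓕 (𝓕⁻ φc) = φc := by
    apply Continuous.fourier_fourierInv_eq _ hφc_int hFφc_int
    exact Complex.continuous_ofReal.comp hφ.continuous
  have smul_eq : ∀ (F : ℝ → ℂ) (x : ℝ), φ x • F x = F x * φc x := by
    intro F x
    rw [Complex.real_smul, mul_comm]
  calc ∫ x, φ x • m |x| = ∫ x, m |x| * φc x := by simp_rw [smul_eq (fun x => m |x|)]
    _ = ∫ x, m |x| * (𝓕 (𝓕⁻ φc)) x := by rw [hinv]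
    _ = ∫ x, (𝓕 fun x => m |x|) x * (𝓕⁻ φc) x := (flipF hme_int hψ_int).symm
    _ = ∫ x, h x * (𝓕⁻ φc) x := by rw [hFme]
    _ = ∫ x, (𝓕⁻ h) x * φc x := (flipFinv hh_int hφc_int).symm
    _ = ∫ x, φ x • (𝓕⁻ h) x := by simp_rw [smul_eq (𝓕⁻ h)]
  rfl


lemma setLIntegral_add_shift (g : ℝ → ℝ≥0∞) (n a b : ℝ) :
    ∫⁻ t in Set.Icc a b, g (t + n) = ∫⁻ t in Set.Icc (a + n) (b + n), g t := by
  have h := (measurePreserving_add_right (volume : Measure ℝ) n).setLIntegral_comp_preimage_emb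
    (measurableEmbedding_addRight n) g (Set.Icc (a + n) (b + n))
  rw [Set.preimage_add_const_Icc, add_sub_cancel_right, add_sub_cancel_right] at h
  exact h

lemma setIntegral_add_shift (g : ℝ → ℂ) (n a b : ℝ) :
    ∫ t in Set.Icc a b, g (t + n) = ∫ t in Set.Icc (a + n) (b + n), g t := by
  have h := (measurePreserving_add_right (volume : Measure ℝ) n).setIntegral_preimage_emb
    (measurableEmbedding_addRight n) g (Set.Icc (a + n) (b + n))
  rw [Set.preimage_add_const_Icc, add_sub_cancel_right, add_sub_cancel_right] at h
  exact h

lemma shift_disjoint : Pairwise (Function.onFun Disjoint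
    fun n : ℤ => Set.Ioc (-(1:ℝ)/2 + n) (1/2 + n)) := by
  intro a b hab
  rw [Function.onFun, Set.Ioc_disjoint_Ioc]
  rcases hab.lt_or_gt with h | h
  · have h1 : (a:ℝ) + 1 ≤ b := by exact_mod_cast Int.add_one_le_iff.mpr h
    exact le_trans (min_le_left _ _) (le_trans (by linarith) (le_max_right _ _))
  · have h1 : (b:ℝ) + 1 ≤ a := by exact_mod_cast Int.add_one_le_iff.mpr h
    exact le_trans (min_le_right _ _) (le_trans (by linarith) (le_max_left _ _))

lemma shift_iUnion : (⋃ n : ℤ, Set.Ioc (-(1:ℝ)/2 + n) (1/2 + n)) = Set.univ := by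
  ext t
  simp only [Set.mem_iUnion, Set.mem_univ, iff_true, Set.mem_Ioc]
  refine ⟨⌈t - 1/2⌉, ?_, ?_⟩
  · have := Int.ceil_lt_add_one (t - 1/2)
    linarith
  · have := Int.le_ceil (t - 1/2)
    linarith

/-- If `m : [0,∞) → ℂ` is regulated, bounded, integrable, with `m̂` integrable on
`(0,∞)` (extended evenly to `ℝ`), then the periodization
`b_R(t) = Σ_{n∈ℤ} R m̂(R(t+n))` converges absolutely a.e. on `[−1/2,1/2]`, defines an
integrable function there, and its Fourier coefficients are
`∫_{−1/2}^{1/2} b_R(t) e^{−2πikt} dt = m(|k|/R)/2` for every `k ∈ ℤ`. -/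
theorem statement9 (m : ℝ → ℂ)
    (hreg : Regulated m)
    (hbd : ∃ M : ℝ, ∀ l : ℝ, ‖m l‖ ≤ M)
    (hint : IntegrableOn m (Set.Ici 0))
    (hhat : IntegrableOn (cosT m) (Set.Ioi 0))
    (R : ℝ) (hR : 0 < R) :
    (∀ᵐ t ∂(volume.restrict (Set.Icc (-(1 : ℝ) / 2) (1 / 2))),
        Summable (fun n : ℤ => (R : ℂ) * cosTE m (R * (t + (n : ℝ))))) ∧
    IntegrableOn (fun t => ∑' n : ℤ, (R : ℂ) * cosTE m (R * (t + (n : ℝ))))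
      (Set.Icc (-(1 : ℝ) / 2) (1 / 2)) ∧
    ∀ k : ℤ,
      (∫ t in Set.Icc (-(1 : ℝ) / 2) (1 / 2),
          (∑' n : ℤ, (R : ℂ) * cosTE m (R * (t + (n : ℝ)))) *
            Complex.exp (-(2 * (Real.pi : ℂ)) * Complex.I * (k : ℂ) * (t : ℂ))) =
        m (|(k : ℝ)| / R) / 2 := by
  set F : ℝ → ℂ := fun t => (R:ℂ) * cosTE m (R * t) with hFdef
  have hFcont : Continuous F :=
    continuous_const.mul ((cosTE_continuous hint).comp (continuous_const.mul continuous_id))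
  have hFint : Integrable F := ((cosTE_integrable hhat).comp_mul_left' hR.ne').const_mul _
  set I : Set ℝ := Set.Icc (-(1:ℝ)/2) (1/2) with hIdef
  set s : ℤ → Set ℝ := fun n => Set.Ioc (-(1:ℝ)/2 + n) (1/2 + n) with hsdef
  have hsm : ∀ n : ℤ, MeasurableSet (s n) := fun n => measurableSet_Ioc
  have hrestrict : ∀ n : ℤ,
      (volume : Measure ℝ).restrict (Set.Icc (-(1:ℝ)/2 + n) (1/2 + n)) = volume.restrict (s n) :=
    fun n => (Measure.restrict_congr_set Ioc_ae_eq_Icc).symm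
  have hTF : ∑' n : ℤ, ∫⁻ t in I, (‖F (t + (n:ℝ))‖₊ : ℝ≥0∞) = ∫⁻ t, (‖F t‖₊ : ℝ≥0∞) := by
    calc ∑' n : ℤ, ∫⁻ t in I, (‖F (t + (n:ℝ))‖₊ : ℝ≥0∞)
        = ∑' n : ℤ, ∫⁻ t in s n, (‖F t‖₊ : ℝ≥0∞) := by
          refine tsum_congr fun n => ?_
          rw [hIdef, setLIntegral_add_shift (fun t => (‖F t‖₊ : ℝ≥0∞)) (n:ℝ), hrestrict n]
      _ = ∫⁻ t in ⋃ n : ℤ, s n, (‖F t‖₊ : ℝ≥0∞) :=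
          (lintegral_iUnion hsm shift_disjoint _).symm
      _ = ∫⁻ t, (‖F t‖₊ : ℝ≥0∞) := by rw [hsdef, shift_iUnion, Measure.restrict_univ]
  have hTfin : ∫⁻ t, (‖F t‖₊ : ℝ≥0∞) < ⊤ := hFint.2
  have hmeasn : ∀ n : ℤ, Measurable fun t : ℝ => (‖F (t + (n:ℝ))‖₊ : ℝ≥0∞) := fun n =>
    (hFcont.comp (continuous_add_right ((n:ℝ)))).measurable.nnnorm.coe_nnreal_ennreal
  have hae1 : ∀ᵐ t ∂(volume.restrict I), (∑' n : ℤ, (‖F (t + (n:ℝ))‖₊ : ℝ≥0∞)) < ⊤ := by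
    apply ae_lt_top (Measurable.ennreal_tsum hmeasn)
    rw [lintegral_tsum fun n => (hmeasn n).aemeasurable, hTF]
    exact hTfin.ne
  have hsummable : ∀ᵐ t ∂(volume.restrict I), Summable fun n : ℤ => ‖F (t + (n:ℝ))‖₊ := by
    filter_upwards [hae1] with t ht
    exact ENNReal.tsum_coe_ne_top_iff_summable.mp ht.ne
  have part1 : ∀ᵐ t ∂(volume.restrict I), Summable fun n : ℤ => F (t + (n:ℝ)) := by
    filter_upwards [hsummable] with t ht
    exact Summable.of_nnnorm ht
  refine ⟨part1, ?_, ?_⟩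
  · -- integrability of the periodization
    constructor
    · apply aestronglyMeasurable_of_tendsto_ae (atTop : Filter (Finset ℤ))
        (f := fun (fs : Finset ℤ) => fun t => ∑ n ∈ fs, F (t + (n:ℝ)))
      · intro fs
        exact (continuous_finset_sum fs fun n _ =>
          hFcont.comp (continuous_add_right ((n:ℝ)))).aestronglyMeasurable.restrict
      · filter_upwards [part1] with t ht
        exact ht.hasSum
    · show (∫⁻ t in I, (‖∑' n : ℤ, F (t + (n:ℝ))‖₊ : ℝ≥0∞)) < ⊤
      calc ∫⁻ t in I, (‖∑' n : ℤ, F (t + (n:ℝ))‖₊ : ℝ≥0∞)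
          ≤ ∫⁻ t in I, ∑' n : ℤ, (‖F (t + (n:ℝ))‖₊ : ℝ≥0∞) := by
            apply lintegral_mono_ae
            filter_upwards [hsummable] with t ht
            calc (‖∑' n : ℤ, F (t + (n:ℝ))‖₊ : ℝ≥0∞)
                ≤ ((∑' n : ℤ, ‖F (t + (n:ℝ))‖₊ : ℝ≥0) : ℝ≥0∞) :=
                  ENNReal.coe_le_coe.mpr (nnnorm_tsum_le ht)
              _ = ∑' n : ℤ, (‖F (t + (n:ℝ))‖₊ : ℝ≥0∞) := ENNReal.coe_tsum ht
        _ = ∑' n : ℤ, ∫⁻ t in I, (‖F (t + (n:ℝ))‖₊ : ℝ≥0∞) :=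
            lintegral_tsum fun n => (hmeasn n).aemeasurable
        _ = ∫⁻ t, (‖F t‖₊ : ℝ≥0∞) := hTF
        _ < ⊤ := hTfin
  · intro k
    set E : ℝ → ℂ := fun t : ℝ => Complex.exp (-(2 * (Real.pi : ℂ)) * Complex.I * (k : ℂ) * (t : ℂ))
      with hEdef
    have hEexp : ∀ t : ℝ, -(2 * (Real.pi : ℂ)) * Complex.I * (k : ℂ) * (t : ℂ) =
        ((-(2 * π * k * t) : ℝ) : ℂ) * Complex.I := by
      intro t; push_cast; ring
    have hEnorm1 : ∀ t : ℝ, ‖E t‖ = 1 := by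
      intro t
      rw [hEdef]
      dsimp only
      rw [hEexp t, Complex.norm_exp_ofReal_mul_I]
    have hEnorm : ∀ t : ℝ, ‖E t‖₊ = 1 := fun t => NNReal.coe_injective (by
      rw [coe_nnnorm, hEnorm1 t, NNReal.coe_one])
    have hEcont : Continuous E := by
      apply Complex.continuous_exp.comp
      exact (continuous_const.mul Complex.continuous_ofReal : Continuous fun t : ℝ =>
        -(2 * (Real.pi : ℂ)) * Complex.I * (k : ℂ) * (t : ℂ))
    have hEper : ∀ (t : ℝ) (n : ℤ), E (t + (n:ℝ)) = E t := by
      intro t n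
      rw [hEdef]
      dsimp only
      rw [show ((t + (n:ℝ) : ℝ) : ℂ) = (t : ℂ) + (n : ℂ) by push_cast; ring]
      rw [mul_add, Complex.exp_add]
      have h1 : -(2 * (Real.pi : ℂ)) * Complex.I * (k : ℂ) * (n : ℂ) =
          ((-(k * n) : ℤ) : ℂ) * (2 * (Real.pi : ℂ) * Complex.I) := by push_cast; ring
      rw [h1, Complex.exp_int_mul_two_pi_mul_I, mul_one]
    have hswap : (∫ t in I, (∑' n : ℤ, F (t + (n:ℝ))) * E t) =
        ∑' n : ℤ, ∫ t in I, F (t + (n:ℝ)) * E t := by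
      rw [show (fun t => (∑' n : ℤ, F (t + (n:ℝ))) * E t)
          = fun t => ∑' n : ℤ, (F (t + (n:ℝ)) * E t) from funext fun t => tsum_mul_right.symm]
      apply integral_tsum
      · exact fun n => ((hFcont.comp (continuous_add_right ((n:ℝ)))).mul
          hEcont).aestronglyMeasurable.restrict
      · have hnn : ∀ (n : ℤ) (t : ℝ), (‖F (t + (n:ℝ)) * E t‖₊ : ℝ≥0∞)
            = (‖F (t + (n:ℝ))‖₊ : ℝ≥0∞) := by
          intro n t
          rw [nnnorm_mul, hEnorm t, mul_one]
        simp_rw [enorm_eq_nnnorm, hnn, hTF]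
        exact hTfin.ne
    have hterm : ∀ n : ℤ, (∫ t in I, F (t + (n:ℝ)) * E t) = ∫ t in s n, F t * E t := by
      intro n
      have h1 : (fun t => F (t + (n:ℝ)) * E t) = fun t => (fun u => F u * E u) (t + (n:ℝ)) := by
        funext t
        dsimp only
        rw [hEper t n]
      rw [h1, hIdef, setIntegral_add_shift (fun u => F u * E u) (n:ℝ), hrestrict n]
    have hFE_int : Integrable (fun t => F t * E t) := by
      apply (hFint.bdd_mul (c := 1) hEcont.aestronglyMeasurable (Filter.Eventually.of_forall fun t => le_of_eq (hEnorm1 t))).congr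
      filter_upwards with t
      exact mul_comm (E t) (F t)
    have hsum2 : ∑' n : ℤ, ∫ t in s n, F t * E t = ∫ t, F t * E t := by
      have h2 := integral_iUnion hsm shift_disjoint
        (f := fun t => F t * E t) (by rw [hsdef, shift_iUnion]; exact hFE_int.integrableOn)
      rw [hsdef, shift_iUnion, Measure.restrict_univ] at h2
      exact h2.symm
    set G : ℝ → ℂ := fun u => cosTE m u *
      Complex.exp (((-2 * π * u * ((k:ℝ)/R) : ℝ) : ℂ) * Complex.I) with hGdef
    have hexp_eq : ∀ t : ℝ, ((-2 * π * (R * t) * ((k:ℝ)/R) : ℝ) : ℂ) * Complex.I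
        = -(2 * (Real.pi : ℂ)) * Complex.I * (k : ℂ) * (t : ℂ) := by
      intro t
      have h0 : (-2 * π * (R * t) * ((k:ℝ)/R) : ℝ) = -(2 * π * k * t) := by
        field_simp
      rw [h0, hEexp t]
    have hFE_eq : ∀ t : ℝ, F t * E t = (R:ℂ) * G (R * t) := by
      intro t
      rw [hGdef, hFdef, hEdef]
      dsimp only
      rw [hexp_eq t, mul_assoc]
    have hstep2 : ∫ t, F t * E t = ∫ u, G u := by
      simp_rw [hFE_eq]
      rw [integral_const_mul, Measure.integral_comp_mul_left G R,
        _root_.abs_of_pos (inv_pos.mpr hR), Complex.real_smul, ← mul_assoc,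
        ← Complex.ofReal_mul, mul_inv_cancel₀ hR.ne', Complex.ofReal_one, one_mul]
    have hGF : ∫ u, G u = 𝓕 (cosTE m) ((k:ℝ)/R) := by
      rw [Real.fourier_real_eq_integral_exp_smul]
      congr 1
      funext v
      rw [hGdef]
      dsimp only
      rw [smul_eq_mul, mul_comm]
    have heven : ∀ w : ℝ, 𝓕 (cosTE m) (-w) = 𝓕 (cosTE m) w := by
      intro w
      rw [← Real.fourierInv_eq_fourier_neg,
        Real.fourierInv_eq_fourier_comp_neg]
      refine congrArg (fun f : ℝ → ℂ => 𝓕 f _) ?_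
      funext x
      exact cosTE_even x
    have habs : 𝓕 (cosTE m) ((k:ℝ)/R) = 𝓕 (cosTE m) (|(k:ℝ)|/R) := by
      rcases abs_cases (k:ℝ) with ⟨h1, _⟩ | ⟨h1, _⟩
      · rw [h1]
      · rw [h1, neg_div, heven]
    set h : ℝ → ℂ := fun t => (2:ℂ) * cosTE m t with hhdef
    have hh_int : Integrable h := (cosTE_integrable hhat).const_mul 2
    have hgc : Continuous (𝓕⁻ h) := by
      have hc : Continuous fun p : ℝ × ℝ => (-innerₗ ℝ) p.1 p.2 := by
        simp only [LinearMap.neg_apply]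
        exact continuous_inner.neg
      exact VectorFourier.fourierIntegral_continuous Real.continuous_fourierChar hc hh_int
    have hmg : ∀ x : ℝ, 0 ≤ x → m x = 𝓕⁻ h x :=
      regulated_eq hgc (me_ae_eq hint hhat) hreg
    have hdouble : 𝓕 h (|(k:ℝ)|/R) = 2 * 𝓕 (cosTE m) (|(k:ℝ)|/R) := by
      rw [Real.fourier_real_eq_integral_exp_smul,
        Real.fourier_real_eq_integral_exp_smul, ← integral_const_mul]
      congr 1
      funext v
      rw [hhdef]
      dsimp only
      rw [smul_eq_mul, smul_eq_mul]
      ring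
    have hFinv : 𝓕⁻ h (|(k:ℝ)|/R) = 𝓕 h (|(k:ℝ)|/R) := by
      conv_lhs => rw [Real.fourierInv_eq_fourier_comp_neg]
      refine congrArg (fun f : ℝ → ℂ => 𝓕 f _) ?_
      funext x
      rw [hhdef]
      dsimp only
      rw [cosTE_even x]
    have hfinal : m (|(k:ℝ)|/R) = 2 * 𝓕 (cosTE m) (|(k:ℝ)|/R) := by
      rw [hmg _ (div_nonneg (abs_nonneg _) hR.le), hFinv, hdouble]
    calc (∫ t in I, (∑' n : ℤ, F (t + (n:ℝ))) * E t)
        = ∑' n : ℤ, ∫ t in I, F (t + (n:ℝ)) * E t := hswap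
      _ = ∑' n : ℤ, ∫ t in s n, F t * E t := tsum_congr hterm
      _ = ∫ t, F t * E t := hsum2
      _ = ∫ u, G u := hstep2
      _ = 𝓕 (cosTE m) ((k:ℝ)/R) := hGF
      _ = 𝓕 (cosTE m) (|(k:ℝ)|/R) := habs
      _ = m (|(k:ℝ)|/R) / 2 := by rw [hfinal]; ring
end
end

section
/- Let (X, dist) be a metric space, let E ⊆ X be a finite set, let R > 0, r₀ ≥ 1/R, and D > 0. Let Ê be the set of all x ∈ E for which there exists a closed ball B = B̄(c, r) with 1/R ≤ r ≤ r₀, x ∈ B, and #(E ∩ B) ≥ D·r. Then there exist finitely many pairwise disjoint closed balls B₁ = B̄(c₁, r₁), …, B_N = B̄(c_N, r_N) with 1/R ≤ r_n ≤ r₀ and #(E ∩ B_n) ≥ D·r_n for each n, such that Σ_{n=1}^N r_n ≤ #E / D and Ê ⊆ ⋃_{n=1}^N B̄(c_n, 5 r_n). -/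
open Metric Set


lemma vitali_aux {X : Type*} [MetricSpace X] (E : Set X) (hE : E.Finite)
    (r₀ : ℝ) (F : Set (X × ℝ))
    (hpos : ∀ b ∈ F, 0 < b.2) (hub : ∀ b ∈ F, b.2 ≤ r₀)
    (hpt : ∀ b ∈ F, (E ∩ Metric.closedBall b.1 b.2).Nonempty) :
    ∀ (k : ℕ) (L : List (X × ℝ)), (∀ a ∈ L, a ∈ F) →
      L.Pairwise (fun a b => Disjoint (Metric.closedBall a.1 a.2) (Metric.closedBall b.1 b.2)) →
      (∀ b ∈ F, (∀ a ∈ L, Disjoint (Metric.closedBall a.1 a.2) (Metric.closedBall b.1 b.2)) ∨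
        (∃ a ∈ L, (Metric.closedBall a.1 a.2 ∩ Metric.closedBall b.1 b.2).Nonempty ∧
          b.2 ≤ 2 * a.2)) →
      (E \ ⋃ a ∈ L, Metric.closedBall a.1 a.2).ncard ≤ k →
      ∃ L' : List (X × ℝ), (∀ a ∈ L', a ∈ F) ∧
        L'.Pairwise (fun a b => Disjoint (Metric.closedBall a.1 a.2) (Metric.closedBall b.1 b.2)) ∧
        ∀ b ∈ F, ∃ a ∈ L', (Metric.closedBall a.1 a.2 ∩ Metric.closedBall b.1 b.2).Nonempty ∧
          b.2 ≤ 2 * a.2 := by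
  intro k
  induction k with
  | zero =>
    intro L hLF hLP hInv hcard
    refine ⟨L, hLF, hLP, ?_⟩
    intro b hbF
    rcases hInv b hbF with hL | h
    · -- contradiction: b contains a point of E outside all balls of L
      exfalso
      obtain ⟨x, hxE, hxb⟩ := hpt b hbF
      have hx : x ∈ E \ ⋃ a ∈ L, Metric.closedBall a.1 a.2 := by
        refine ⟨hxE, ?_⟩
        simp only [Set.mem_iUnion, not_exists]
        intro a ha
        exact fun hxa => (hL a ha).ne_of_mem hxa hxb rfl
      have hfin : (E \ ⋃ a ∈ L, Metric.closedBall a.1 a.2).Finite :=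
        hE.subset diff_subset
      have := (Set.ncard_pos hfin).mpr ⟨x, hx⟩
      omega
    · exact h
  | succ k ih =>
    intro L hLF hLP hInv hcard
    by_cases hG : ∃ b ∈ F, ∀ a ∈ L,
        Disjoint (Metric.closedBall a.1 a.2) (Metric.closedBall b.1 b.2)
    · -- pick a ball of radius > half the sup
      set G : Set (X × ℝ) := {b ∈ F | ∀ a ∈ L,
        Disjoint (Metric.closedBall a.1 a.2) (Metric.closedBall b.1 b.2)} with hGdef
      have hGne : G.Nonempty := by
        obtain ⟨b, hb1, hb2⟩ := hG; exact ⟨b, hb1, hb2⟩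
      have himg : (Prod.snd '' G).Nonempty := hGne.image _
      have hbdd : BddAbove (Prod.snd '' G) := by
        refine ⟨r₀, ?_⟩
        rintro y ⟨b, hb, rfl⟩
        exact hub b hb.1
      set s := sSup (Prod.snd '' G) with hsdef
      have hspos : 0 < s := by
        obtain ⟨b, hb⟩ := hGne
        exact lt_of_lt_of_le (hpos b hb.1) (le_csSup hbdd ⟨b, hb, rfl⟩)
      obtain ⟨y, ⟨b₀, hb₀G, rfl⟩, hy⟩ := exists_lt_of_lt_csSup himg (half_lt_self hspos)
      -- new list
      have hLF' : ∀ a ∈ b₀ :: L, a ∈ F := by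
        intro a ha
        rcases List.mem_cons.mp ha with rfl | ha
        · exact hb₀G.1
        · exact hLF a ha
      have hLP' : (b₀ :: L).Pairwise (fun a b =>
          Disjoint (Metric.closedBall a.1 a.2) (Metric.closedBall b.1 b.2)) := by
        refine List.pairwise_cons.mpr ⟨?_, hLP⟩
        intro a ha
        exact (hb₀G.2 a ha).symm
      have hInv' : ∀ b ∈ F, (∀ a ∈ b₀ :: L,
          Disjoint (Metric.closedBall a.1 a.2) (Metric.closedBall b.1 b.2)) ∨
          (∃ a ∈ b₀ :: L, (Metric.closedBall a.1 a.2 ∩ Metric.closedBall b.1 b.2).Nonempty ∧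
            b.2 ≤ 2 * a.2) := by
        intro b hbF
        rcases hInv b hbF with hL | ⟨a, ha, hint⟩
        · have hbG : b ∈ G := ⟨hbF, hL⟩
          have hb2 : b.2 ≤ s := le_csSup hbdd ⟨b, hbG, rfl⟩
          have hb2' : b.2 ≤ 2 * b₀.2 := by linarith
          by_cases hd : Disjoint (Metric.closedBall b₀.1 b₀.2) (Metric.closedBall b.1 b.2)
          · left
            intro a ha
            rcases List.mem_cons.mp ha with rfl | ha
            · exact hd
            · exact hL a ha
          · exact Or.inr ⟨b₀, List.mem_cons_self,
              Set.not_disjoint_iff_nonempty_inter.mp hd, hb2'⟩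
        · exact Or.inr ⟨a, List.mem_cons_of_mem _ ha, hint⟩
      have hcard' : (E \ ⋃ a ∈ b₀ :: L, Metric.closedBall a.1 a.2).ncard ≤ k := by
        obtain ⟨x, hxE, hxb⟩ := hpt b₀ hb₀G.1
        have hxL : x ∈ E \ ⋃ a ∈ L, Metric.closedBall a.1 a.2 := by
          refine ⟨hxE, ?_⟩
          simp only [Set.mem_iUnion, not_exists]
          intro a ha
          exact fun hxa => (hb₀G.2 a ha).ne_of_mem hxa hxb rfl
        have hsub : (E \ ⋃ a ∈ b₀ :: L, Metric.closedBall a.1 a.2) ⊆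
            (E \ ⋃ a ∈ L, Metric.closedBall a.1 a.2) \ {x} := by
          intro z hz
          refine ⟨⟨hz.1, ?_⟩, ?_⟩
          · intro hzU
            exact hz.2 (by
              simp only [Set.mem_iUnion] at hzU ⊢
              obtain ⟨a, ha, hza⟩ := hzU
              exact ⟨a, List.mem_cons_of_mem _ ha, hza⟩)
          · intro hzx
            simp only [Set.mem_singleton_iff] at hzx
            subst hzx
            exact hz.2 (by
              simp only [Set.mem_iUnion]
              exact ⟨b₀, List.mem_cons_self, hxb⟩)
        have hfin : (E \ ⋃ a ∈ L, Metric.closedBall a.1 a.2).Finite := hE.subset diff_subset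
        have h1 : ((E \ ⋃ a ∈ L, Metric.closedBall a.1 a.2) \ {x}).ncard <
            (E \ ⋃ a ∈ L, Metric.closedBall a.1 a.2).ncard :=
          Set.ncard_diff_singleton_lt_of_mem hxL hfin
        have h2 := Set.ncard_le_ncard hsub (hfin.subset (diff_subset))
        omega
      exact ih (b₀ :: L) hLF' hLP' hInv' hcard'
    · refine ⟨L, hLF, hLP, ?_⟩
      intro b hbF
      rcases hInv b hbF with hL | h
      · exact absurd ⟨b, hbF, hL⟩ hG
      · exact h

/-- Vitali-type selection: in a metric space, given a finite set `E`, from the family of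
closed balls `B̄(c,r)` with `1/R ≤ r ≤ r₀` containing at least `D·r` points of `E`, one
can select a finite pairwise disjoint subfamily `B̄(cₙ, rₙ)` with `Σ rₙ ≤ #E / D` whose
`5`-fold dilates cover the set `Ê` of all points of `E` lying in some ball of the family. -/
theorem statement10 {X : Type*} [MetricSpace X] (E : Set X) (hE : E.Finite)
    (R r₀ D : ℝ) (hR : 0 < R) (hr₀ : 1 / R ≤ r₀) (hD : 0 < D) :
    ∃ (N : ℕ) (c : Fin N → X) (r : Fin N → ℝ),
      (∀ n : Fin N, 1 / R ≤ r n ∧ r n ≤ r₀) ∧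
      (∀ n : Fin N, D * r n ≤ ((E ∩ Metric.closedBall (c n) (r n)).ncard : ℝ)) ∧
      (∀ i j : Fin N, i ≠ j →
        Disjoint (Metric.closedBall (c i) (r i)) (Metric.closedBall (c j) (r j))) ∧
      (∑ n : Fin N, r n) ≤ (E.ncard : ℝ) / D ∧
      {x ∈ E | ∃ (cc : X) (rr : ℝ), 1 / R ≤ rr ∧ rr ≤ r₀ ∧ x ∈ Metric.closedBall cc rr ∧
          D * rr ≤ ((E ∩ Metric.closedBall cc rr).ncard : ℝ)} ⊆
        ⋃ n : Fin N, Metric.closedBall (c n) (5 * r n) := by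
  classical
  have hRpos : 0 < 1 / R := by positivity
  set F : Set (X × ℝ) := {b | 1 / R ≤ b.2 ∧ b.2 ≤ r₀ ∧
    D * b.2 ≤ ((E ∩ Metric.closedBall b.1 b.2).ncard : ℝ)} with hFdef
  have hpos : ∀ b ∈ F, 0 < b.2 := fun b hb => lt_of_lt_of_le hRpos hb.1
  have hub : ∀ b ∈ F, b.2 ≤ r₀ := fun b hb => hb.2.1
  have hpt : ∀ b ∈ F, (E ∩ Metric.closedBall b.1 b.2).Nonempty := by
    intro b hb
    have h1 : (0 : ℝ) < D * b.2 := mul_pos hD (hpos b hb)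
    have h2 := hb.2.2
    have : (E ∩ Metric.closedBall b.1 b.2).ncard ≠ 0 := by
      intro h; rw [h] at h2; push_cast at h2; linarith
    exact Set.nonempty_of_ncard_ne_zero this
  obtain ⟨L, hLF, hLP, hcov⟩ := vitali_aux E hE r₀ F hpos hub hpt E.ncard []
    (by simp) (by simp) (by intro b hb; left; simp)
    (by simpa using Set.ncard_le_ncard diff_subset hE)
  refine ⟨L.length, fun n => (L.get n).1, fun n => (L.get n).2, ?_, ?_, ?_, ?_, ?_⟩
  · intro n
    have hmem := hLF (L.get n) (L.get_mem n)
    exact ⟨hmem.1, hmem.2.1⟩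
  · intro n
    exact (hLF (L.get n) (L.get_mem n)).2.2
  · intro i j hij
    rcases lt_or_gt_of_ne hij with h | h
    · exact List.pairwise_iff_get.mp hLP i j h
    · exact (List.pairwise_iff_get.mp hLP j i h).symm
  · -- sum bound
    rw [le_div_iff₀ hD]
    have key : ∀ n : Fin L.length, D * (L.get n).2 ≤
        ((E ∩ Metric.closedBall (L.get n).1 (L.get n).2).ncard : ℝ) :=
      fun n => (hLF (L.get n) (L.get_mem n)).2.2
    set t : Fin L.length → Finset X := fun n =>
      hE.toFinset.filter (fun x => x ∈ Metric.closedBall (L.get n).1 (L.get n).2) with htdef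
    have hteq : ∀ n, (E ∩ Metric.closedBall (L.get n).1 (L.get n).2).ncard = (t n).card := by
      intro n
      rw [← Set.ncard_coe_finset (t n)]
      congr 1
      ext x
      simp [htdef, hE.mem_toFinset, Set.mem_inter_iff]
    have htdisj : ∀ i j : Fin L.length, i ≠ j → Disjoint (t i) (t j) := by
      intro i j hij
      have hd : Disjoint (Metric.closedBall (L.get i).1 (L.get i).2)
          (Metric.closedBall (L.get j).1 (L.get j).2) := by
        rcases lt_or_gt_of_ne hij with h | h
        · exact List.pairwise_iff_get.mp hLP i j h
        · exact (List.pairwise_iff_get.mp hLP j i h).symm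
      rw [Finset.disjoint_left]
      intro x hxi hxj
      simp only [htdef, Finset.mem_filter] at hxi hxj
      exact hd.ne_of_mem hxi.2 hxj.2 rfl
    have hsum : ∑ n : Fin L.length, (t n).card ≤ hE.toFinset.card := by
      rw [← Finset.card_biUnion (fun i _ j _ hij => htdisj i j hij)]
      apply Finset.card_le_card
      intro x hx
      simp only [Finset.mem_biUnion, htdef, Finset.mem_filter] at hx
      obtain ⟨i, _, hx, _⟩ := hx
      exact hx
    have hEcard : E.ncard = hE.toFinset.card := Set.ncard_eq_toFinset_card E hE
    calc (∑ n : Fin L.length, (L.get n).2) * D = ∑ n : Fin L.length, D * (L.get n).2 := by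
          rw [Finset.sum_mul]; congr 1; ext n; ring
      _ ≤ ∑ n : Fin L.length, ((t n).card : ℝ) := by
          apply Finset.sum_le_sum
          intro n _
          rw [← hteq n]
          exact key n
      _ = ((∑ n : Fin L.length, (t n).card : ℕ) : ℝ) := by push_cast; ring
      _ ≤ (hE.toFinset.card : ℝ) := by exact_mod_cast hsum
      _ = (E.ncard : ℝ) := by rw [hEcard]
  · -- covering
    intro x hx
    obtain ⟨hxE, cc, rr, h1, h2, hxb, h3⟩ := hx
    have hbF : (cc, rr) ∈ F := ⟨h1, h2, h3⟩
    obtain ⟨a, haL, ⟨y, hya, hyb⟩, hrr⟩ := hcov (cc, rr) hbF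
    obtain ⟨n, hn⟩ := List.mem_iff_get.mp haL
    simp only [Set.mem_iUnion]
    refine ⟨n, ?_⟩
    rw [Metric.mem_closedBall]
    have hxcc : dist x cc ≤ rr := hxb
    have hycc : dist y cc ≤ rr := hyb
    have hya' : dist y a.1 ≤ a.2 := hya
    have hra : 0 < a.2 := hpos a (hLF a haL)
    subst hn
    calc dist x (L.get n).1 ≤ dist x cc + dist cc y + dist y (L.get n).1 :=
          dist_triangle4 _ _ _ _
      _ ≤ rr + rr + (L.get n).2 := by
          rw [dist_comm cc y]
          exact add_le_add (add_le_add hxcc hycc) hya'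
      _ ≤ 5 * (L.get n).2 := by linarith
end

section
/- Let d ≥ 1 and let p : ℝ^d ∖ {0} → ℝ be twice continuously differentiable and positively homogeneous of degree 1. Let ε > 0 and let ξ : (−ε, ε) → ℝ^d ∖ {0} be a twice differentiable curve with p(ξ(a)) = 1 for all a. Then ⟨∇²(p²)(ξ(0)) ξ(0), ξ''(0)⟩ = −⟨∇²(p²)(ξ(0)) ξ'(0), ξ'(0)⟩. -/
open Set

/-- Second-variation identity along a curve on the unit level set of a positively
1-homogeneous `C²` function `p` on `ℝ^d ∖ {0}`: if `p(ξ(a)) = 1` on `(−ε,ε)` then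
`⟨∇²(p²)(ξ(0)) ξ(0), ξ''(0)⟩ = −⟨∇²(p²)(ξ(0)) ξ'(0), ξ'(0)⟩`. -/
theorem statement14 (d : ℕ) (hd : 1 ≤ d)
    (p : EuclideanSpace ℝ (Fin d) → ℝ)
    (hp : ContDiffOn ℝ 2 p {ξ : EuclideanSpace ℝ (Fin d) | ξ ≠ 0})
    (hhom : ∀ s : ℝ, 0 < s → ∀ ξ : EuclideanSpace ℝ (Fin d), ξ ≠ 0 →
      p (s • ξ) = s * p ξ)
    (ε : ℝ) (hε : 0 < ε)
    (ξ : ℝ → EuclideanSpace ℝ (Fin d))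
    (hne : ∀ a ∈ Set.Ioo (-ε) ε, ξ a ≠ 0)
    (hdiff1 : ∀ a ∈ Set.Ioo (-ε) ε, DifferentiableAt ℝ ξ a)
    (hdiff2 : ∀ a ∈ Set.Ioo (-ε) ε, DifferentiableAt ℝ (deriv ξ) a)
    (hval : ∀ a ∈ Set.Ioo (-ε) ε, p (ξ a) = 1) :
    fderiv ℝ (fderiv ℝ (fun x => (p x) ^ 2)) (ξ 0) (ξ 0) (deriv (deriv ξ) 0) =
      -(fderiv ℝ (fderiv ℝ (fun x => (p x) ^ 2)) (ξ 0) (deriv ξ 0) (deriv ξ 0)) := by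
  set q : EuclideanSpace ℝ (Fin d) → ℝ := fun x => (p x) ^ 2 with hq
  have hU : IsOpen {x : EuclideanSpace ℝ (Fin d) | x ≠ 0} := isOpen_compl_singleton
  have hqC : ∀ x : EuclideanSpace ℝ (Fin d), x ≠ 0 → ContDiffAt ℝ 2 q x := fun x hx =>
    (hp.pow 2).contDiffAt (hU.mem_nhds hx)
  have hqd : ∀ x : EuclideanSpace ℝ (Fin d), x ≠ 0 → DifferentiableAt ℝ q x := fun x hx =>
    (hqC x hx).differentiableAt (by norm_num)
  have hqd' : ∀ x : EuclideanSpace ℝ (Fin d), x ≠ 0 → DifferentiableAt ℝ (fderiv ℝ q) x := fun x hx =>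
    ((hqC x hx).fderiv_right (m := 1) (by norm_num)).differentiableAt one_ne_zero
  -- homogeneity of q
  have hqhom : ∀ s : ℝ, 0 < s → ∀ x : EuclideanSpace ℝ (Fin d), x ≠ 0 → q (s • x) = s ^ 2 * q x := by
    intro s hs x hx
    simp only [hq, hhom s hs x hx]
    ring
  -- homogeneity of fderiv q
  have hDhom : ∀ s : ℝ, 0 < s → ∀ x : EuclideanSpace ℝ (Fin d), x ≠ 0 →
      fderiv ℝ q (s • x) = s • fderiv ℝ q x := by
    intro s hs x hx
    have hsx : s • x ≠ 0 := smul_ne_zero (ne_of_gt hs) hx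
    have hL : HasFDerivAt (fun y : EuclideanSpace ℝ (Fin d) => s • y) (s • ContinuousLinearMap.id ℝ (EuclideanSpace ℝ (Fin d))) x := by
      exact (hasFDerivAt_id x).const_smul s
    have hcomp : HasFDerivAt (fun y : EuclideanSpace ℝ (Fin d) => q (s • y))
        ((fderiv ℝ q (s • x)).comp (s • ContinuousLinearMap.id ℝ (EuclideanSpace ℝ (Fin d)))) x :=
      ((hqd _ hsx).hasFDerivAt).comp x hL
    have hev : (fun y : EuclideanSpace ℝ (Fin d) => q (s • y)) =ᶠ[nhds x] fun y => s ^ 2 * q y := by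
      filter_upwards [hU.mem_nhds hx] with y hy
      exact hqhom s hs y hy
    have hcomp' : HasFDerivAt (fun y : EuclideanSpace ℝ (Fin d) => s ^ 2 * q y)
        ((fderiv ℝ q (s • x)).comp (s • ContinuousLinearMap.id ℝ (EuclideanSpace ℝ (Fin d)))) x :=
      hcomp.congr_of_eventuallyEq hev.symm
    have h2 : HasFDerivAt (fun y : EuclideanSpace ℝ (Fin d) => s ^ 2 * q y) (s ^ 2 • fderiv ℝ q x) x :=
      (hqd x hx).hasFDerivAt.const_mul (s ^ 2)
    have heq := hcomp'.unique h2
    ext v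
    have := congrArg (fun (L : EuclideanSpace ℝ (Fin d) →L[ℝ] ℝ) => L v) heq
    simp only [ContinuousLinearMap.comp_apply, ContinuousLinearMap.smul_apply,
      ContinuousLinearMap.id_apply, map_smul, smul_eq_mul] at this ⊢
    have hs' : s ≠ 0 := ne_of_gt hs
    refine mul_left_cancel₀ hs' ?_
    linear_combination this
  -- Euler identity for fderiv q : fderiv² q x x = fderiv q x
  have hEuler : ∀ x : EuclideanSpace ℝ (Fin d), x ≠ 0 → fderiv ℝ (fderiv ℝ q) x x = fderiv ℝ q x := by
    intro x hx
    have hcurve : HasDerivAt (fun s : ℝ => s • x) x 1 := by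
      simpa using (hasDerivAt_id (1:ℝ)).smul_const x
    have hfd' : HasFDerivAt (fderiv ℝ q) (fderiv ℝ (fderiv ℝ q) x) ((1:ℝ) • x) := by
      rw [one_smul]; exact (hqd' x hx).hasFDerivAt
    have h1 : HasDerivAt (fun s : ℝ => fderiv ℝ q (s • x))
        (fderiv ℝ (fderiv ℝ q) x x) 1 := hfd'.comp_hasDerivAt 1 hcurve
    have hev : (fun s : ℝ => fderiv ℝ q (s • x)) =ᶠ[nhds (1:ℝ)]
        fun s => s • fderiv ℝ q x := by
      filter_upwards [isOpen_Ioi.mem_nhds (by norm_num : (1:ℝ) ∈ Ioi (0:ℝ))] with s hs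
      exact hDhom s hs x hx
    have h2 : HasDerivAt (fun s : ℝ => s • fderiv ℝ q x) (fderiv ℝ q x) 1 := by
      simpa using (hasDerivAt_id (1:ℝ)).smul_const (fderiv ℝ q x)
    have h1' : HasDerivAt (fun s : ℝ => s • fderiv ℝ q x)
        (fderiv ℝ (fderiv ℝ q) x x) 1 := h1.congr_of_eventuallyEq hev.symm
    exact h1'.unique h2
  -- the curve
  have h0 : (0:ℝ) ∈ Ioo (-ε) ε := ⟨by linarith, hε⟩
  have hIoo : IsOpen (Ioo (-ε) ε) := isOpen_Ioo
  -- first derivative of q ∘ ξ vanishes on Ioo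
  have hg0 : ∀ a ∈ Ioo (-ε) ε, fderiv ℝ q (ξ a) (deriv ξ a) = 0 := by
    intro a ha
    have hchain : HasDerivAt (fun b => q (ξ b)) (fderiv ℝ q (ξ a) (deriv ξ a)) a :=
      ((hqd _ (hne a ha)).hasFDerivAt).comp_hasDerivAt a (hdiff1 a ha).hasDerivAt
    have hev : (fun b => q (ξ b)) =ᶠ[nhds a] fun _ => (1:ℝ) := by
      filter_upwards [hIoo.mem_nhds ha] with b hb
      simp [hq, hval b hb]
    have hconst : HasDerivAt (fun _ : ℝ => (1:ℝ)) 0 a := hasDerivAt_const a 1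
    exact hchain.unique (hconst.congr_of_eventuallyEq hev)
  -- second derivative
  have hc : HasDerivAt (fun a => fderiv ℝ q (ξ a))
      (fderiv ℝ (fderiv ℝ q) (ξ 0) (deriv ξ 0)) 0 :=
    ((hqd' _ (hne 0 h0)).hasFDerivAt).comp_hasDerivAt 0 (hdiff1 0 h0).hasDerivAt
  have hu : HasDerivAt (deriv ξ) (deriv (deriv ξ) 0) 0 := (hdiff2 0 h0).hasDerivAt
  have hG : HasDerivAt (fun a => fderiv ℝ q (ξ a) (deriv ξ a))
      (fderiv ℝ (fderiv ℝ q) (ξ 0) (deriv ξ 0) (deriv ξ 0)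
        + fderiv ℝ q (ξ 0) (deriv (deriv ξ) 0)) 0 := hc.clm_apply hu
  have hGev : (fun a => fderiv ℝ q (ξ a) (deriv ξ a)) =ᶠ[nhds (0:ℝ)] fun _ => (0:ℝ) := by
    filter_upwards [hIoo.mem_nhds h0] with b hb
    exact hg0 b hb
  have hzero : fderiv ℝ (fderiv ℝ q) (ξ 0) (deriv ξ 0) (deriv ξ 0)
      + fderiv ℝ q (ξ 0) (deriv (deriv ξ) 0) = 0 :=
    hG.unique ((hasDerivAt_const (0:ℝ) (0:ℝ)).congr_of_eventuallyEq hGev)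
  have hE := congrArg (fun (L : EuclideanSpace ℝ (Fin d) →L[ℝ] ℝ) => L (deriv (deriv ξ) 0))
    (hEuler (ξ 0) (hne 0 h0))
  rw [hE]
  linarith [hzero]
end

section
/- Let d ≥ 1 and let p : ℝ^d ∖ {0} → (0,∞) be twice continuously differentiable and positively homogeneous of degree 1. Let ξ₀ ∈ ℝ^d with p(ξ₀) = 1, set H = (1/2)∇²(p²)(ξ₀), and let A ≥ 1 be such that ⟨H w, w⟩ ≥ A^{−1}|w|² for all w ∈ ℝ^d. Let ε > 0 and let ξ : (−ε, ε) → ℝ^d ∖ {0} be a twice differentiable curve with p(ξ(a)) = 1 for all a and ξ(0) = ξ₀, and define c(a) = ⟨H ξ₀, ξ(a)⟩. Then c(0) = 1, c'(0) = 0, and c''(0) ≤ −A^{−1} |ξ'(0)|². -/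
open Set

/-- Let `p` be a positive, positively 1-homogeneous `C²` function on `ℝ^d ∖ {0}`, let
`ξ₀` satisfy `p(ξ₀) = 1`, let `H = (1/2)∇²(p²)(ξ₀)`, and suppose
`⟨H w, w⟩ ≥ A⁻¹ |w|²` for all `w`, where `A ≥ 1`. For a twice differentiable curve `ξ`
on the unit level set of `p` with `ξ(0) = ξ₀`, the function `c(a) = ⟨H ξ₀, ξ(a)⟩`
satisfies `c(0) = 1`, `c'(0) = 0` and `c''(0) ≤ −A⁻¹ |ξ'(0)|²`. -/
theorem statement15 (d : ℕ) (hd : 1 ≤ d)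
    (p : EuclideanSpace ℝ (Fin d) → ℝ)
    (hp : ContDiffOn ℝ 2 p {ξ : EuclideanSpace ℝ (Fin d) | ξ ≠ 0})
    (hpos : ∀ ξ : EuclideanSpace ℝ (Fin d), ξ ≠ 0 → 0 < p ξ)
    (hhom : ∀ s : ℝ, 0 < s → ∀ ξ : EuclideanSpace ℝ (Fin d), ξ ≠ 0 →
      p (s • ξ) = s * p ξ)
    (ξ₀ : EuclideanSpace ℝ (Fin d)) (hξ₀ : ξ₀ ≠ 0) (hpξ₀ : p ξ₀ = 1)
    (A : ℝ) (hA : 1 ≤ A)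
    (hH : ∀ w : EuclideanSpace ℝ (Fin d),
      A⁻¹ * ‖w‖ ^ 2 ≤ (1 / 2) * fderiv ℝ (fderiv ℝ (fun x => (p x) ^ 2)) ξ₀ w w)
    (ε : ℝ) (hε : 0 < ε)
    (ξ : ℝ → EuclideanSpace ℝ (Fin d))
    (hne : ∀ a ∈ Set.Ioo (-ε) ε, ξ a ≠ 0)
    (hdiff1 : ∀ a ∈ Set.Ioo (-ε) ε, DifferentiableAt ℝ ξ a)
    (hdiff2 : ∀ a ∈ Set.Ioo (-ε) ε, DifferentiableAt ℝ (deriv ξ) a)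
    (hval : ∀ a ∈ Set.Ioo (-ε) ε, p (ξ a) = 1)
    (hξ0 : ξ 0 = ξ₀) :
    ((1 : ℝ) / 2) * fderiv ℝ (fderiv ℝ (fun x => (p x) ^ 2)) ξ₀ ξ₀ (ξ 0) = 1 ∧
    deriv (fun a : ℝ =>
      ((1 : ℝ) / 2) * fderiv ℝ (fderiv ℝ (fun x => (p x) ^ 2)) ξ₀ ξ₀ (ξ a)) 0 = 0 ∧
    deriv (deriv (fun a : ℝ =>
        ((1 : ℝ) / 2) * fderiv ℝ (fderiv ℝ (fun x => (p x) ^ 2)) ξ₀ ξ₀ (ξ a))) 0 ≤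
      -(A⁻¹) * ‖deriv ξ 0‖ ^ 2 := by
  set q : EuclideanSpace ℝ (Fin d) → ℝ := fun x => (p x) ^ 2 with hq_def
  have hU : IsOpen {x : EuclideanSpace ℝ (Fin d) | x ≠ 0} := isOpen_ne
  have hq : ContDiffOn ℝ 2 q {x : EuclideanSpace ℝ (Fin d) | x ≠ 0} := hp.pow 2
  have hqat : ∀ x : EuclideanSpace ℝ (Fin d), x ≠ 0 → ContDiffAt ℝ 2 q x :=
    fun x hx => hq.contDiffAt (hU.mem_nhds hx)
  have hfd : ∀ x : EuclideanSpace ℝ (Fin d), x ≠ 0 → HasFDerivAt q (fderiv ℝ q x) x := by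
    intro x hx
    exact ((hqat x hx).differentiableAt (by norm_num)).hasFDerivAt
  have hqhom : ∀ s : ℝ, 0 < s → ∀ x : EuclideanSpace ℝ (Fin d), x ≠ 0 → q (s • x) = s ^ 2 * q x := by
    intro s hs x hx
    simp only [hq_def, hhom s hs x hx]; ring
  -- Euler's relation, degree 2
  have hEuler1 : ∀ x : EuclideanSpace ℝ (Fin d), x ≠ 0 → fderiv ℝ q x x = 2 * q x := by
    intro x hx
    have hline : HasDerivAt (fun s : ℝ => s • x) ((1:ℝ) • x) 1 :=
      (hasDerivAt_id 1).smul_const x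
    have h1 : HasDerivAt (fun s : ℝ => q (s • x)) (fderiv ℝ q x x) 1 := by
      have := (hfd x hx).comp_hasDerivAt_of_eq 1 hline (by simp)
      simp only [one_smul] at this; exact this
    have h2 : HasDerivAt (fun s : ℝ => s ^ 2 * q x) (2 * q x) 1 := by
      simpa using (hasDerivAt_pow 2 (1:ℝ)).mul_const (q x)
    have heq : (fun s : ℝ => s ^ 2 * q x) =ᶠ[nhds 1] fun s : ℝ => q (s • x) := by
      filter_upwards [Ioi_mem_nhds (by norm_num : (0:ℝ) < 1)] with s hs
      exact (hqhom s hs x hx).symm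
    exact ((h2.congr_of_eventuallyEq heq.symm).unique h1).symm
  -- homogeneity of the gradient
  have hDq : ∀ s : ℝ, 0 < s → ∀ x : EuclideanSpace ℝ (Fin d), x ≠ 0 →
      fderiv ℝ q (s • x) = s • fderiv ℝ q x := by
    intro s hs x hx
    have hsx : s • x ≠ 0 := smul_ne_zero (ne_of_gt hs) hx
    have hL : HasFDerivAt (fun y : EuclideanSpace ℝ (Fin d) => s • y) (s • ContinuousLinearMap.id ℝ (EuclideanSpace ℝ (Fin d))) x :=
      (s • ContinuousLinearMap.id ℝ (EuclideanSpace ℝ (Fin d))).hasFDerivAt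
    have h1 : HasFDerivAt (fun y : EuclideanSpace ℝ (Fin d) => q (s • y))
        ((fderiv ℝ q (s • x)).comp (s • ContinuousLinearMap.id ℝ (EuclideanSpace ℝ (Fin d)))) x :=
      (hfd (s • x) hsx).comp x hL
    have h2 : HasFDerivAt (fun y : EuclideanSpace ℝ (Fin d) => s ^ 2 * q y) (s ^ 2 • fderiv ℝ q x) x :=
      (hfd x hx).const_mul (s ^ 2)
    have heq : (fun y : EuclideanSpace ℝ (Fin d) => q (s • y)) =ᶠ[nhds x] fun y : EuclideanSpace ℝ (Fin d) => s ^ 2 * q y := by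
      filter_upwards [hU.mem_nhds hx] with y hy
      exact hqhom s hs y hy
    have h1' : HasFDerivAt (fun y : EuclideanSpace ℝ (Fin d) => s ^ 2 * q y)
        ((fderiv ℝ q (s • x)).comp (s • ContinuousLinearMap.id ℝ (EuclideanSpace ℝ (Fin d)))) x :=
      h1.congr_of_eventuallyEq heq.symm
    have hkey := h1'.unique h2
    ext v
    have := congrArg (fun (L : EuclideanSpace ℝ (Fin d) →L[ℝ] ℝ) => L v) hkey
    simp only [ContinuousLinearMap.coe_comp', Function.comp_apply,
      ContinuousLinearMap.smul_apply, ContinuousLinearMap.coe_id', id_eq,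
      smul_eq_mul] at this ⊢
    have hmap : fderiv ℝ q (s • x) (s • v) = s * fderiv ℝ q (s • x) v := by
      simp [map_smul]
    rw [hmap] at this
    have hs' : s ≠ 0 := ne_of_gt hs
    field_simp at this ⊢
    nlinarith [this]
  have hfd2 : DifferentiableAt ℝ (fderiv ℝ q) ξ₀ := by
    have := (hqat ξ₀ hξ₀).fderiv_right (m := 1) (by norm_num)
    exact this.differentiableAt (by norm_num)
  -- Euler for the Hessian: D²q(ξ₀) ξ₀ = Dq(ξ₀)
  have hE2 : fderiv ℝ (fderiv ℝ q) ξ₀ ξ₀ = fderiv ℝ q ξ₀ := by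
    have hline : HasDerivAt (fun s : ℝ => s • ξ₀) ((1:ℝ) • ξ₀) 1 :=
      (hasDerivAt_id 1).smul_const ξ₀
    have h1 : HasDerivAt (fun s : ℝ => fderiv ℝ q (s • ξ₀))
        (fderiv ℝ (fderiv ℝ q) ξ₀ ξ₀) 1 := by
      have := hfd2.hasFDerivAt.comp_hasDerivAt_of_eq 1 hline (by simp)
      simp only [one_smul] at this; exact this
    have h2 : HasDerivAt (fun s : ℝ => s • fderiv ℝ q ξ₀) (fderiv ℝ q ξ₀) 1 := by
      simpa using (hasDerivAt_id (1:ℝ)).smul_const (fderiv ℝ q ξ₀)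
    have heq : (fun s : ℝ => s • fderiv ℝ q ξ₀) =ᶠ[nhds 1]
        fun s : ℝ => fderiv ℝ q (s • ξ₀) := by
      filter_upwards [Ioi_mem_nhds (by norm_num : (0:ℝ) < 1)] with s hs
      exact (hDq s hs ξ₀ hξ₀).symm
    exact h1.unique (h2.congr_of_eventuallyEq heq.symm)
  have hmem0 : (0:ℝ) ∈ Set.Ioo (-ε) ε := ⟨by linarith, hε⟩
  have hIoo : Set.Ioo (-ε) ε ∈ nhds (0:ℝ) := Ioo_mem_nhds (by linarith) hε
  -- the level-set relation: Dq(ξ a)(ξ'(a)) = 0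
  have hG0 : ∀ a ∈ Set.Ioo (-ε) ε, fderiv ℝ q (ξ a) (deriv ξ a) = 0 := by
    intro a ha
    have h1 : HasDerivAt (fun t => q (ξ t)) (fderiv ℝ q (ξ a) (deriv ξ a)) a :=
      (hfd (ξ a) (hne a ha)).comp_hasDerivAt a (hdiff1 a ha).hasDerivAt
    have heq : (fun t => q (ξ t)) =ᶠ[nhds a] fun _ => (1:ℝ) := by
      filter_upwards [(isOpen_Ioo).mem_nhds ha] with t ht
      simp only [hq_def]; rw [hval t ht]; norm_num
    have h2 : HasDerivAt (fun t => q (ξ t)) 0 a :=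
      (hasDerivAt_const a (1:ℝ)).congr_of_eventuallyEq heq
    exact h1.unique h2
  have hqξ₀ : q ξ₀ = 1 := by simp only [hq_def]; rw [hpξ₀]; norm_num
  -- rewrite the target function
  have hfun : (fun a : ℝ =>
      ((1 : ℝ) / 2) * fderiv ℝ (fderiv ℝ (fun x => (p x) ^ 2)) ξ₀ ξ₀ (ξ a)) =
      fun a : ℝ => ((1 : ℝ) / 2) * fderiv ℝ q ξ₀ (ξ a) := by
    funext a
    rw [show (fun x : EuclideanSpace ℝ (Fin d) => (p x) ^ 2) = q from rfl, hE2]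
  have hcder : ∀ a ∈ Set.Ioo (-ε) ε,
      HasDerivAt (fun a : ℝ => ((1 : ℝ) / 2) * fderiv ℝ q ξ₀ (ξ a))
        (((1 : ℝ) / 2) * fderiv ℝ q ξ₀ (deriv ξ a)) a := by
    intro a ha
    exact ((fderiv ℝ q ξ₀).hasFDerivAt.comp_hasDerivAt a
      (hdiff1 a ha).hasDerivAt).const_mul ((1:ℝ)/2)
  refine ⟨?_, ?_, ?_⟩
  · rw [hE2, hξ0, hEuler1 ξ₀ hξ₀, hqξ₀]
    norm_num
  · rw [hfun, (hcder 0 hmem0).deriv]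
    have h := hG0 0 hmem0
    rw [hξ0] at h
    rw [h]; ring
  · rw [hfun]
    have hder_eq : deriv (fun a : ℝ => ((1 : ℝ) / 2) * fderiv ℝ q ξ₀ (ξ a)) =ᶠ[nhds 0]
        fun a : ℝ => ((1 : ℝ) / 2) * fderiv ℝ q ξ₀ (deriv ξ a) := by
      filter_upwards [hIoo] with a ha
      exact (hcder a ha).deriv
    rw [hder_eq.deriv_eq]
    have h2nd : HasDerivAt (fun a : ℝ => ((1 : ℝ) / 2) * fderiv ℝ q ξ₀ (deriv ξ a))
        (((1 : ℝ) / 2) * fderiv ℝ q ξ₀ (deriv (deriv ξ) 0)) 0 :=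
      ((fderiv ℝ q ξ₀).hasFDerivAt.comp_hasDerivAt 0
        (hdiff2 0 hmem0).hasDerivAt).const_mul ((1:ℝ)/2)
    rw [h2nd.deriv]
    -- second derivative of the constraint
    have hF1 : HasDerivAt (fun a : ℝ => fderiv ℝ q (ξ a))
        (fderiv ℝ (fderiv ℝ q) ξ₀ (deriv ξ 0)) 0 := by
      have := hfd2.hasFDerivAt.comp_hasDerivAt_of_eq 0 (hdiff1 0 hmem0).hasDerivAt hξ0.symm
      exact this
    have hG : HasDerivAt (fun a : ℝ => fderiv ℝ q (ξ a) (deriv ξ a))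
        (fderiv ℝ (fderiv ℝ q) ξ₀ (deriv ξ 0) (deriv ξ 0)
          + fderiv ℝ q (ξ 0) (deriv (deriv ξ) 0)) 0 :=
      hF1.clm_apply (hdiff2 0 hmem0).hasDerivAt
    have hGzero : HasDerivAt (fun a : ℝ => fderiv ℝ q (ξ a) (deriv ξ a)) 0 0 := by
      refine (hasDerivAt_const 0 (0:ℝ)).congr_of_eventuallyEq ?_
      filter_upwards [hIoo] with a ha
      exact hG0 a ha
    have hkey := hG.unique hGzero
    rw [hξ0] at hkey
    have hHw := hH (deriv ξ 0)
    linarith [hHw, hkey]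
end
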